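/- arXiv:2504.00897 — 4 statements merged into one kernel-verified Lean document; each statement's English description precedes it below -/
import Mathlib

section
/- Let Σ₁ and Σ₂ be simplicial polyhedral fans in ℝ^{d₁} and ℝ^{d₂} with ray generator matrices U₁ ∈ ℝ^{n₁×d₁} and U₂ ∈ ℝ^{n₂×d₂}, and let Σ = Σ₁ × Σ₂ be the product fan in ℝ^{d₁+d₂} with block-diagonal ray matrix U₁ ⊕ U₂. Then Amp_{Σ,U₁⊕U₂} = Amp_{Σ₁,U₁} · Amp_{Σ₂,U₂} and Adj_{Σ,U₁⊕U₂} = Adj_{Σ₁,U₁} · Adj_{Σ₂,U₂}, where the functions in the disjoint variable sets are multiplied in the ring of rational functions (resp. polynomials) in all n₁+n₂ variables. In particular, for full-dimensional simple polytopes P₁, P₂ with normal fans Σ₁ = Σ_{P₁}, Σ₂ = Σ_{P₂}, one has Amp_{P₁×P₂,U₁⊕U₂} = Amp_{P₁,U₁} · Amp_{P₂,U₂} and Adj_{P₁×P₂,U₁⊕U₂} = Adj_{P₁,U₁} · Adj_{P₂,U₂}. -/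
open MvPolynomial Finset MeasureTheory
open scoped ENNReal

/-- The polyhedral cone spanned by the ray generators (rows of `U`) indexed by `σ`. -/
def coneOf {ι κ : Type*} [Fintype ι] (U : Matrix ι κ ℝ) (σ : Finset ι) : Set (κ → ℝ) :=
  {y | ∃ c : ι → ℝ, (∀ i, 0 ≤ c i) ∧ (∀ i, i ∉ σ → c i = 0) ∧ y = ∑ i, c i • U i}

/-- A simplicial polyhedral fan with rays indexed by `ι`, living in the space `κ → ℝ`.
Since the fan is simplicial, each cone is recorded by its finite set of rays. -/
structure SimplicialFan (ι κ : Type*) [Fintype ι] [DecidableEq ι] where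
  /-- the ray generator matrix: its rows are the chosen ray generators -/
  U : Matrix ι κ ℝ
  /-- the cones of the fan, each recorded by its set of rays -/
  cones : Finset (Finset ι)
  empty_mem : ∅ ∈ cones
  ray_mem : ∀ i : ι, {i} ∈ cones
  downward : ∀ σ ∈ cones, ∀ τ, τ ⊆ σ → τ ∈ cones
  indep : ∀ σ ∈ cones, LinearIndependent ℝ (fun i : σ => U i.1)
  inter : ∀ σ ∈ cones, ∀ τ ∈ cones, coneOf U σ ∩ coneOf U τ = coneOf U (σ ∩ τ)

/-- `|det|` of the square submatrix of `U` on the rows indexed by `σ`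
(zero if `σ` does not have exactly `card κ` elements). -/
noncomputable def absDetRows {ι κ : Type*} [Fintype κ] [DecidableEq κ]
    (U : Matrix ι κ ℝ) (σ : Finset ι) : ℝ :=
  if h : σ.card = Fintype.card κ then
    |(Matrix.of fun j k : κ =>
        U ((σ.equivFin.symm (Fintype.equivFinOfCardEq h.symm j)) : ι) k).det|
  else 0

/-- The universal adjoint polynomial of the fan data `(U, cones)`:
`Adj = ∑_{σ ∈ Σ(d)} |det U_σ| ∏_{ρ ∉ σ(1)} x_ρ`. -/
noncomputable def Adj {ι κ : Type*} [Fintype ι] [DecidableEq ι] [Fintype κ] [DecidableEq κ]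
    (U : Matrix ι κ ℝ) (cones : Finset (Finset ι)) : MvPolynomial ι ℝ :=
  ∑ σ ∈ cones.filter fun σ => σ.card = Fintype.card κ,
    MvPolynomial.C (absDetRows U σ) * ∏ ρ ∈ σᶜ, MvPolynomial.X ρ

/-- The toric amplitude `Amp = ∑_{σ ∈ Σ(d)} |det U_σ| / ∏_{ρ ∈ σ(1)} x_ρ`
as a real-valued function. -/
noncomputable def Amp {ι κ : Type*} [Fintype ι] [DecidableEq ι] [Fintype κ] [DecidableEq κ]
    (U : Matrix ι κ ℝ) (cones : Finset (Finset ι)) (x : ι → ℝ) : ℝ :=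
  ∑ σ ∈ cones.filter fun σ => σ.card = Fintype.card κ, absDetRows U σ / ∏ ρ ∈ σ, x ρ

/-- The toric amplitude with values in `ℝ≥0∞` (for identities with possibly infinite
dual volumes). -/
noncomputable def AmpE {ι κ : Type*} [Fintype ι] [DecidableEq ι] [Fintype κ] [DecidableEq κ]
    (U : Matrix ι κ ℝ) (cones : Finset (Finset ι)) (x : ι → ℝ) : ℝ≥0∞ :=
  ∑ σ ∈ cones.filter fun σ => σ.card = Fintype.card κ,
    ENNReal.ofReal (absDetRows U σ) / ∏ ρ ∈ σ, ENNReal.ofReal (x ρ)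

/-- The toric amplitude as an element of the field of rational functions. -/
noncomputable def AmpFrac {ι κ : Type*} [Fintype ι] [DecidableEq ι] [Fintype κ] [DecidableEq κ]
    (U : Matrix ι κ ℝ) (cones : Finset (Finset ι)) : FractionRing (MvPolynomial ι ℝ) :=
  ∑ σ ∈ cones.filter fun σ => σ.card = Fintype.card κ,
    algebraMap (MvPolynomial ι ℝ) (FractionRing (MvPolynomial ι ℝ)) (MvPolynomial.C (absDetRows U σ)) /
      algebraMap (MvPolynomial ι ℝ) (FractionRing (MvPolynomial ι ℝ)) (∏ ρ ∈ σ, MvPolynomial.X ρ)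

/-- The toric amplitude of fan data whose rays are indexed by a type `α` mapping to `ι`
via `f`, viewed inside the rational function field on the `ι`-variables. -/
noncomputable def AmpFracVia {α ι κ' : Type*} [Fintype α] [DecidableEq α]
    [Fintype κ'] [DecidableEq κ']
    (U' : Matrix α κ' ℝ) (cones' : Finset (Finset α)) (f : α → ι) :
    FractionRing (MvPolynomial ι ℝ) :=
  ∑ σ ∈ cones'.filter fun σ => σ.card = Fintype.card κ',
    algebraMap (MvPolynomial ι ℝ) (FractionRing (MvPolynomial ι ℝ)) (MvPolynomial.C (absDetRows U' σ)) /
      algebraMap (MvPolynomial ι ℝ) (FractionRing (MvPolynomial ι ℝ)) (∏ ρ ∈ σ, MvPolynomial.X (f ρ))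

/-- The polyhedron `P_z = {y : U y + z ≥ 0}`. -/
def Pz {ι κ : Type*} [Fintype κ] (U : Matrix ι κ ℝ) (z : ι → ℝ) : Set (κ → ℝ) :=
  {y | ∀ i, 0 ≤ (∑ j, U i j * y j) + z i}

/-- The face of `P_z` where the inequalities indexed by `τ` are tight. -/
def faceOf {ι κ : Type*} [Fintype κ] (U : Matrix ι κ ℝ) (z : ι → ℝ) (τ : Finset ι) :
    Set (κ → ℝ) :=
  {y | y ∈ Pz U z ∧ ∀ i ∈ τ, (∑ j, U i j * y j) + z i = 0}

/-- `F` is the normal fan of the polytope `P_z`, which is a full-dimensional simple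
(bounded) polytope whose facets are indexed by the rays of `F`: a set of inequalities
spans a cone of the normal fan iff they are simultaneously tight on a nonempty face. -/
def IsNormalFanOf {ι κ : Type*} [Fintype ι] [DecidableEq ι] [Fintype κ]
    (F : SimplicialFan ι κ) (z : ι → ℝ) : Prop :=
  Bornology.IsBounded (Pz F.U z) ∧ (interior (Pz F.U z)).Nonempty ∧
    ∀ σ : Finset ι, σ ∈ F.cones ↔ (faceOf F.U z σ).Nonempty

/-- The polar dual `{u : u ⬝ y ≥ -1 for all y ∈ P}`. -/
def polarDual {κ : Type*} [Fintype κ] (P : Set (κ → ℝ)) : Set (κ → ℝ) :=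
  {u | ∀ y ∈ P, -1 ≤ ∑ j, u j * y j}

/-- Warren's adjoint polynomial `adj_{P_z}(y) = Adj(U y + z)`. -/
noncomputable def warrenAdj {ι κ : Type*} [Fintype ι] [DecidableEq ι] [Fintype κ] [DecidableEq κ]
    (U : Matrix ι κ ℝ) (cones : Finset (Finset ι)) (z : ι → ℝ) : MvPolynomial κ ℝ :=
  MvPolynomial.aeval (fun i : ι => (∑ j, MvPolynomial.C (U i j) * MvPolynomial.X j) + MvPolynomial.C (z i))
    (Adj U cones)

/-- The neighbours `nb(τ)` of a cone `τ`: rays `ρ ∉ τ` with `τ ∪ {ρ}` a cone. -/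
def nbF {ι : Type*} [Fintype ι] [DecidableEq ι] (cones : Finset (Finset ι)) (τ : Finset ι) :
    Finset ι :=
  Finset.univ.filter fun ρ => ρ ∉ τ ∧ insert ρ τ ∈ cones

/-- The rows of `U * T` indexed by `τ` are the first `k` standard basis vectors. -/
def RowsStd {ι : Type*} {d : ℕ} (U : Matrix ι (Fin d) ℝ) (T : Matrix (Fin d) (Fin d) ℝ)
    (τ : Finset ι) (k : ℕ) : Prop :=
  ∃ g : {ρ : ι // ρ ∈ τ} → Fin d, Function.Injective g ∧ (∀ ρ, (g ρ : ℕ) < k) ∧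
    ∀ ρ : {ρ : ι // ρ ∈ τ}, (U * T) ρ.1 = Pi.single (g ρ) 1

/-- The ray matrix of the star fan `Σ_τ`: the last `d-k` columns of `U * T`, on the
rows indexed by `nb(τ)` (here `N`). -/
def starU {ι : Type*} {d : ℕ} (U : Matrix ι (Fin d) ℝ) (T : Matrix (Fin d) (Fin d) ℝ)
    (N : Finset ι) (k : ℕ) : Matrix {ρ : ι // ρ ∈ N} {j : Fin d // k ≤ (j : ℕ)} ℝ :=
  fun ρ j => (U * T) ρ.1 j.1

/-- The cones of the star fan `Σ_τ`, recorded by their sets of rays (as subsets of `N = nb(τ)`). -/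
def starCones {ι : Type*} [DecidableEq ι] (cones : Finset (Finset ι)) (τ : Finset ι)
    (N : Finset ι) : Finset (Finset {ρ : ι // ρ ∈ N}) :=
  (cones.filter fun σ => τ ⊆ σ).image fun σ => (σ \ τ).subtype fun ρ => ρ ∈ N

/-- Restriction of polynomials to the coordinate subspace `Λ_τ = {x_ρ = 0, ρ ∈ τ}`. -/
noncomputable def restrictTo {ι : Type*} {R : Type*} [CommSemiring R] [DecidableEq ι]
    (τ : Finset ι) : MvPolynomial ι R →ₐ[R] MvPolynomial ι R :=
  MvPolynomial.aeval fun ρ => if ρ ∈ τ then 0 else MvPolynomial.X ρ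

/-- The deformation cone of a (complete simplicial) fan: those `x` for which each
"virtual vertex" of `P_x` determined by a maximal cone satisfies all inequalities. -/
def DefCone {ι κ : Type*} [Fintype ι] [DecidableEq ι] [Fintype κ] (F : SimplicialFan ι κ) :
    Set (ι → ℝ) :=
  {x | ∀ σ ∈ F.cones, σ.card = Fintype.card κ →
    ∃ v : κ → ℝ, (∀ ρ ∈ σ, (∑ j, F.U ρ j * v j) + x ρ = 0) ∧
      ∀ ρ : ι, 0 ≤ (∑ j, F.U ρ j * v j) + x ρ}

/-- The `(d+1) × (d+1)` determinant `W_Δ(x)` of the matrix with rows `(u_ρ, x_ρ)`,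
`ρ ∈ S` (defined up to sign; zero if `S` does not have `d+1` elements). -/
noncomputable def Wdet {ι κ : Type*} [Fintype κ] [DecidableEq κ]
    (U : Matrix ι κ ℝ) (S : Finset ι) (x : ι → ℝ) : ℝ :=
  if h : S.card = Fintype.card (Option κ) then
    (Matrix.of fun a b : Option κ =>
      Option.elim b (x ((S.equivFin.symm (Fintype.equivFinOfCardEq h.symm a)) : ι))
        (fun k => U ((S.equivFin.symm (Fintype.equivFinOfCardEq h.symm a)) : ι) k)).det
  else 0

lemma absDetRows_eq_abs_det {ι κ : Type*} [Fintype κ] [DecidableEq κ]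
    (U : Matrix ι κ ℝ) (σ : Finset ι) (h : σ.card = Fintype.card κ)
    (e : κ ≃ {x // x ∈ σ}) :
    absDetRows U σ = |(Matrix.of fun j k : κ => U (e j : ι) k).det| := by
  rw [absDetRows, dif_pos h]
  set e₀ : κ ≃ {x // x ∈ σ} := (Fintype.equivFinOfCardEq h.symm).trans σ.equivFin.symm with he₀
  have hM : (Matrix.of fun j k : κ => U (e j : ι) k)
      = (Matrix.of fun j k : κ => U (e₀ j : ι) k).submatrix (⇑(e.trans e₀.symm)) id := by
    ext j k; simp [Matrix.submatrix, e₀]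
  have h0 : (Matrix.of fun j k : κ =>
      U ((σ.equivFin.symm (Fintype.equivFinOfCardEq h.symm j)) : ι) k)
      = Matrix.of fun j k : κ => U (e₀ j : ι) k := rfl
  rw [h0, hM, Matrix.det_permute, abs_mul]
  rcases Int.units_eq_one_or (Equiv.Perm.sign (e.trans e₀.symm)) with hs | hs <;> simp [hs]

lemma cone_card_le {ι κ : Type*} [Fintype ι] [DecidableEq ι] [Fintype κ]
    (F : SimplicialFan ι κ) {σ : Finset ι} (hσ : σ ∈ F.cones) :
    σ.card ≤ Fintype.card κ := by
  have h := (F.indep σ hσ).fintype_card_le_finrank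
  simpa [Module.finrank_fintype_fun_eq_card, Fintype.card_coe] using h

lemma absDetRows_fromBlocks {ι₁ ι₂ κ₁ κ₂ : Type*}
    [Fintype κ₁] [DecidableEq κ₁] [Fintype κ₂] [DecidableEq κ₂]
    (U₁ : Matrix ι₁ κ₁ ℝ) (U₂ : Matrix ι₂ κ₂ ℝ)
    (σ₁ : Finset ι₁) (σ₂ : Finset ι₂)
    (h₁ : σ₁.card = Fintype.card κ₁) (h₂ : σ₂.card = Fintype.card κ₂) :
    absDetRows (Matrix.fromBlocks U₁ 0 0 U₂) (σ₁.disjSum σ₂)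
      = absDetRows U₁ σ₁ * absDetRows U₂ σ₂ := by
  have hc : (σ₁.disjSum σ₂).card = Fintype.card (κ₁ ⊕ κ₂) := by
    simp [Finset.card_disjSum, h₁, h₂]
  set e₁ : κ₁ ≃ {x // x ∈ σ₁} := (Fintype.equivFinOfCardEq h₁.symm).trans σ₁.equivFin.symm
  set e₂ : κ₂ ≃ {x // x ∈ σ₂} := (Fintype.equivFinOfCardEq h₂.symm).trans σ₂.equivFin.symm
  set f : κ₁ ⊕ κ₂ → {x // x ∈ σ₁.disjSum σ₂} :=
    Sum.elim (fun j => ⟨Sum.inl (e₁ j), by simp⟩) (fun j => ⟨Sum.inr (e₂ j), by simp⟩) with hf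
  have hinj : Function.Injective f := by
    rintro (a | a) (b | b) hab
    · simp only [hf, Sum.elim_inl, Subtype.mk.injEq, Sum.inl.injEq] at hab
      exact congrArg Sum.inl (e₁.injective (Subtype.ext hab))
    · simp [hf, Subtype.ext_iff] at hab
    · simp [hf, Subtype.ext_iff] at hab
    · simp only [hf, Sum.elim_inr, Subtype.mk.injEq, Sum.inr.injEq] at hab
      exact congrArg Sum.inr (e₂.injective (Subtype.ext hab))
  have hcard : Fintype.card (κ₁ ⊕ κ₂) = Fintype.card {x // x ∈ σ₁.disjSum σ₂} := by
    simp [Fintype.card_coe, Finset.card_disjSum, h₁, h₂]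
  have hbij : Function.Bijective f :=
    (Fintype.bijective_iff_injective_and_card f).mpr ⟨hinj, hcard⟩
  set e : (κ₁ ⊕ κ₂) ≃ {x // x ∈ σ₁.disjSum σ₂} := Equiv.ofBijective f hbij
  rw [absDetRows_eq_abs_det _ _ hc e, absDetRows_eq_abs_det _ _ h₁ e₁,
    absDetRows_eq_abs_det _ _ h₂ e₂]
  have hMat : (Matrix.of fun j k : κ₁ ⊕ κ₂ => (Matrix.fromBlocks U₁ 0 0 U₂) (e j : ι₁ ⊕ ι₂) k)
      = Matrix.fromBlocks (Matrix.of fun j k : κ₁ => U₁ (e₁ j : ι₁) k) 0 0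
          (Matrix.of fun j k : κ₂ => U₂ (e₂ j : ι₂) k) := by
    ext (j | j) (k | k) <;> rfl
  rw [hMat, Matrix.det_fromBlocks_zero₁₂, abs_mul]

lemma compl_disjSum {ι₁ ι₂ : Type*} [Fintype ι₁] [DecidableEq ι₁] [Fintype ι₂] [DecidableEq ι₂]
    (σ₁ : Finset ι₁) (σ₂ : Finset ι₂) :
    (σ₁.disjSum σ₂)ᶜ = σ₁ᶜ.disjSum σ₂ᶜ := by
  ext (x | x) <;> simp

lemma map_union_eq_disjSum {ι₁ ι₂ : Type*} [DecidableEq ι₁] [DecidableEq ι₂]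
    (σ₁ : Finset ι₁) (σ₂ : Finset ι₂) :
    σ₁.map ⟨Sum.inl, Sum.inl_injective⟩ ∪ σ₂.map ⟨Sum.inr, Sum.inr_injective⟩
      = σ₁.disjSum σ₂ := by
  ext (x | x) <;> simp

/-- The toric amplitude and universal adjoint of a product fan
`Σ = Σ₁ × Σ₂` (with block-diagonal ray matrix `U₁ ⊕ U₂`) factor as the products of
those of the factors; in particular this applies to normal fans of products of
simple polytopes. -/
theorem statement0 {ι₁ ι₂ κ₁ κ₂ : Type*}
    [Fintype ι₁] [DecidableEq ι₁] [Fintype ι₂] [DecidableEq ι₂]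
    [Fintype κ₁] [DecidableEq κ₁] [Fintype κ₂] [DecidableEq κ₂]
    (F₁ : SimplicialFan ι₁ κ₁) (F₂ : SimplicialFan ι₂ κ₂)
    (hrank₁ : F₁.U.rank = Fintype.card κ₁) (hrank₂ : F₂.U.rank = Fintype.card κ₂)
    (F : SimplicialFan (ι₁ ⊕ ι₂) (κ₁ ⊕ κ₂))
    (hU : F.U = Matrix.fromBlocks F₁.U 0 0 F₂.U)
    (hcones : ∀ σ : Finset (ι₁ ⊕ ι₂), σ ∈ F.cones ↔
      ∃ σ₁ ∈ F₁.cones, ∃ σ₂ ∈ F₂.cones,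
        σ = σ₁.map ⟨Sum.inl, Sum.inl_injective⟩ ∪ σ₂.map ⟨Sum.inr, Sum.inr_injective⟩) :
    Adj F.U F.cones =
        MvPolynomial.rename Sum.inl (Adj F₁.U F₁.cones) *
          MvPolynomial.rename Sum.inr (Adj F₂.U F₂.cones) ∧
      ∀ x : ι₁ ⊕ ι₂ → ℝ, (∀ i, x i ≠ 0) →
        Amp F.U F.cones x = Amp F₁.U F₁.cones (x ∘ Sum.inl) * Amp F₂.U F₂.cones (x ∘ Sum.inr) := by
  classical
  have hcard : Fintype.card (κ₁ ⊕ κ₂) = Fintype.card κ₁ + Fintype.card κ₂ := Fintype.card_sum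
  set s := F.cones.filter fun σ => σ.card = Fintype.card (κ₁ ⊕ κ₂) with hs
  set t := (F₁.cones.filter fun σ => σ.card = Fintype.card κ₁) ×ˢ
    (F₂.cones.filter fun σ => σ.card = Fintype.card κ₂) with ht
  have hmem_s : ∀ σ ∈ s, (σ.toLeft, σ.toRight) ∈ t ∧ σ = σ.toLeft.disjSum σ.toRight := by
    intro σ hσ
    rw [hs, Finset.mem_filter] at hσ
    obtain ⟨σ₁, hσ₁, σ₂, hσ₂, hform⟩ := (hcones σ).1 hσ.1
    rw [map_union_eq_disjSum] at hform
    subst hform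
    have hle₁ := cone_card_le F₁ hσ₁
    have hle₂ := cone_card_le F₂ hσ₂
    have hcards : σ₁.card + σ₂.card = Fintype.card κ₁ + Fintype.card κ₂ := by
      have := hσ.2; rwa [Finset.card_disjSum, hcard] at this
    have h1 : σ₁.card = Fintype.card κ₁ := by omega
    have h2 : σ₂.card = Fintype.card κ₂ := by omega
    refine ⟨?_, by simp⟩
    simp [ht, Finset.mem_product, Finset.mem_filter, hσ₁, hσ₂, h1, h2]
  have hmem_t : ∀ p ∈ t, p.1.disjSum p.2 ∈ s ∧ p.1.card = Fintype.card κ₁ ∧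
      p.2.card = Fintype.card κ₂ := by
    intro p hp
    rw [ht, Finset.mem_product, Finset.mem_filter, Finset.mem_filter] at hp
    refine ⟨?_, hp.1.2, hp.2.2⟩
    rw [hs, Finset.mem_filter]
    constructor
    · exact (hcones _).2 ⟨p.1, hp.1.1, p.2, hp.2.1, (map_union_eq_disjSum _ _).symm⟩
    · rw [Finset.card_disjSum, hcard, hp.1.2, hp.2.2]
  constructor
  · unfold Adj
    simp only [map_sum, map_mul, rename_C, map_prod, rename_X]
    rw [Finset.sum_mul_sum, ← Finset.sum_product']
    refine Finset.sum_bij' (fun σ _ => (σ.toLeft, σ.toRight)) (fun p _ => p.1.disjSum p.2)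
      (fun σ hσ => (hmem_s σ hσ).1) (fun p hp => (hmem_t p hp).1)
      (fun σ hσ => ((hmem_s σ hσ).2).symm) (fun p hp => by simp)
      (fun σ hσ => ?_)
    obtain ⟨hpt, hform⟩ := hmem_s σ hσ
    rw [ht, Finset.mem_product, Finset.mem_filter, Finset.mem_filter] at hpt
    conv_lhs => rw [hform]
    rw [hU, absDetRows_fromBlocks _ _ _ _ hpt.1.2 hpt.2.2, compl_disjSum,
      Finset.prod_disjSum, MvPolynomial.C_mul]
    ring
  · intro x hx
    unfold Amp
    rw [Finset.sum_mul_sum, ← Finset.sum_product']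
    refine Finset.sum_bij' (fun σ _ => (σ.toLeft, σ.toRight)) (fun p _ => p.1.disjSum p.2)
      (fun σ hσ => (hmem_s σ hσ).1) (fun p hp => (hmem_t p hp).1)
      (fun σ hσ => ((hmem_s σ hσ).2).symm) (fun p hp => by simp)
      (fun σ hσ => ?_)
    obtain ⟨hpt, hform⟩ := hmem_s σ hσ
    rw [ht, Finset.mem_product, Finset.mem_filter, Finset.mem_filter] at hpt
    conv_lhs => rw [hform]
    rw [hU, absDetRows_fromBlocks _ _ _ _ hpt.1.2 hpt.2.2, Finset.prod_disjSum,
      ← div_mul_div_comm]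
    rfl
end

section
/- Let Σ be a simplicial polyhedral fan in ℝ^d with ray generator matrix U ∈ ℝ^{n×d} of rank d, and let τ ∈ Σ(k) be a k-dimensional cone. Let T_τ be an invertible d×d matrix such that the rows of U·T_τ indexed by τ(1) are the standard basis vectors e₁,…,e_k, set c_τ = |det T_τ|, and let U_τ be the submatrix of U·T_τ consisting of the last d−k columns and the rows indexed by nb(τ), which is a ray matrix for the star fan Σ_τ. Then the restriction of Adj_{Σ,U}(x) to the coordinate subspace Λ_τ = {x : x_ρ = 0 for all ρ ∈ τ(1)} equals c_τ^{-1} · (∏_{ρ ∉ nb(τ), ρ ∉ τ(1)} x_ρ) · Adj_{Σ_τ,U_τ}, where Adj_{Σ_τ,U_τ} is viewed as a polynomial in the variables x_ρ, ρ ∈ nb(τ). -/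
open MvPolynomial Finset MeasureTheory
open scoped ENNReal

lemma abs_det_submatrix {κ β : Type*} [Fintype κ] [DecidableEq κ] [Fintype β] [DecidableEq β]
    (A : Matrix κ κ ℝ) (e₁ e₂ : β ≃ κ) : |(A.submatrix e₁ e₂).det| = |A.det| := by
  have h : A.submatrix e₁ e₂ = (A.submatrix e₂ e₂).submatrix (⇑(e₁.trans e₂.symm)) id := by
    ext p q; simp
  rw [h, Matrix.det_permute (e₁.trans e₂.symm) (A.submatrix e₂ e₂),
    Matrix.det_submatrix_equiv_self]
  rcases Int.units_eq_one_or (Equiv.Perm.sign (e₁.trans e₂.symm)) with hs | hs <;>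
    simp [hs, abs_neg]

lemma absDetRows_eq_abs_det_s1 {α κ β : Type*} [Fintype κ] [DecidableEq κ] [Fintype β] [DecidableEq β]
    (M : Matrix α κ ℝ) (S : Finset α) (h : S.card = Fintype.card κ)
    (f : β → α) (hf : Function.Injective f) (hmem : ∀ b, f b ∈ S) (e : β ≃ κ) :
    absDetRows M S = |(Matrix.of fun p q : β => M (f p) (e q)).det| := by
  rw [absDetRows, dif_pos h]
  set r : κ ≃ {x // x ∈ S} := (Fintype.equivFinOfCardEq h.symm).trans S.equivFin.symm with hr
  have hcards : Fintype.card β = Fintype.card {x // x ∈ S} := by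
    rw [Fintype.card_coe, h, Fintype.card_congr e]
  let f' : β → {x // x ∈ S} := fun b => ⟨f b, hmem b⟩
  have hf' : Function.Bijective f' :=
    (Fintype.bijective_iff_injective_and_card f').2
      ⟨fun a b hab => hf (congrArg Subtype.val hab), hcards⟩
  let fE : β ≃ {x // x ∈ S} := Equiv.ofBijective f' hf'
  have key : (Matrix.of fun p q : β => M (f p) (e q)) =
      (Matrix.of fun j l : κ => M (r j) l).submatrix (⇑(fE.trans r.symm)) (⇑e) := by
    ext p q
    simp only [Matrix.of_apply, Matrix.submatrix_apply, Equiv.trans_apply]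
    rw [Equiv.apply_symm_apply]
    rfl
  rw [key, abs_det_submatrix]
  rfl

lemma card_subtype_le {d k : ℕ} (hkd : k ≤ d) :
    Fintype.card {j : Fin d // k ≤ (j : ℕ)} = d - k := by
  have e1 : {j : Fin d // k ≤ (j : ℕ)} ≃ {j : Fin d // ¬ (j : ℕ) < k} :=
    Equiv.subtypeEquivRight fun j => not_lt.symm
  have e2 : {j : Fin d // (j : ℕ) < k} ≃ Fin k :=
    { toFun := fun j => ⟨j.1, j.2⟩
      invFun := fun i => ⟨⟨i.1, lt_of_lt_of_le i.2 hkd⟩, i.2⟩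
      left_inv := fun _ => rfl
      right_inv := fun _ => rfl }
  rw [Fintype.card_congr e1, Fintype.card_subtype_compl, Fintype.card_congr e2,
    Fintype.card_fin, Fintype.card_fin]

lemma key_det {ι : Type*} [Fintype ι] [DecidableEq ι] {d k : ℕ}
    (U : Matrix ι (Fin d) ℝ) (T : Matrix (Fin d) (Fin d) ℝ)
    (τ σ N : Finset ι) (hsub : τ ⊆ σ) (hστ : ∀ ρ ∈ σ \ τ, ρ ∈ N)
    (hσ : σ.card = d) (hτk : τ.card = k)
    (g : {ρ : ι // ρ ∈ τ} → Fin d) (hginj : Function.Injective g)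
    (hglt : ∀ ρ, (g ρ : ℕ) < k)
    (hrows : ∀ ρ : {ρ : ι // ρ ∈ τ}, (U * T) ρ.1 = Pi.single (g ρ) 1) :
    |T.det| * absDetRows U σ =
      absDetRows (starU U T N k) ((σ \ τ).subtype fun ρ => ρ ∈ N) := by
  have hkd : k ≤ d := by
    have := Fintype.card_le_of_injective g hginj
    rwa [Fintype.card_coe, hτk, Fintype.card_fin] at this
  have cardK : Fintype.card {j : Fin d // (j : ℕ) < k} = k := by
    have e2 : {j : Fin d // (j : ℕ) < k} ≃ Fin k :=
      { toFun := fun j => ⟨j.1, j.2⟩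
        invFun := fun i => ⟨⟨i.1, lt_of_lt_of_le i.2 hkd⟩, i.2⟩
        left_inv := fun _ => rfl
        right_inv := fun _ => rfl }
    rw [Fintype.card_congr e2, Fintype.card_fin]
  have cardκ' : Fintype.card {j : Fin d // k ≤ (j : ℕ)} = d - k := card_subtype_le hkd
  have hsd : (σ \ τ).card = d - k := by rw [Finset.card_sdiff_of_subset hsub, hσ, hτk]
  -- g as an equiv onto {j // j < k}
  let g' : {ρ : ι // ρ ∈ τ} → {j : Fin d // (j : ℕ) < k} := fun ρ => ⟨g ρ, hglt ρ⟩
  have hg' : Function.Bijective g' :=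
    (Fintype.bijective_iff_injective_and_card g').2
      ⟨fun a b hab => hginj (congrArg Subtype.val hab),
        by rw [Fintype.card_coe, hτk, cardK]⟩
  let gE : {ρ : ι // ρ ∈ τ} ≃ {j : Fin d // (j : ℕ) < k} := Equiv.ofBijective g' hg'
  let e₂ : {ρ : ι // ρ ∈ σ \ τ} ≃ {j : Fin d // k ≤ (j : ℕ)} :=
    Fintype.equivOfCardEq (by rw [Fintype.card_coe, hsd, cardκ'])
  let col : ({j : Fin d // (j : ℕ) < k} ⊕ {j : Fin d // k ≤ (j : ℕ)}) ≃ Fin d :=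
    (Equiv.sumCongr (Equiv.refl _) (Equiv.subtypeEquivRight fun j => not_lt.symm)).trans
      (Equiv.sumCompl fun j : Fin d => (j : ℕ) < k)
  have col_inl : ∀ x : {j : Fin d // (j : ℕ) < k}, col (Sum.inl x) = x.1 := by
    intro x; simp [col]
  have col_inr : ∀ y : {j : Fin d // k ≤ (j : ℕ)}, col (Sum.inr y) = y.1 := by
    intro y; simp [col]
  let eσ : ({ρ : ι // ρ ∈ τ} ⊕ {ρ : ι // ρ ∈ σ \ τ}) → ι := Sum.elim Subtype.val Subtype.val
  have eσinj : Function.Injective eσ := by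
    rintro (a | a) (b | b) hab
    · exact congrArg Sum.inl (Subtype.ext hab)
    · have hab' : (a : ι) = b := hab
      exact absurd (show (b : ι) ∈ τ from hab' ▸ a.2) (Finset.mem_sdiff.1 b.2).2
    · have hab' : (a : ι) = b := hab
      exact absurd (show (a : ι) ∈ τ from by rw [hab']; exact b.2) (Finset.mem_sdiff.1 a.2).2
    · exact congrArg Sum.inr (Subtype.ext hab)
  have eσmem : ∀ b, eσ b ∈ σ := by
    rintro (a | a)
    · exact hsub a.2
    · exact (Finset.mem_sdiff.1 a.2).1
  let ecol : ({ρ : ι // ρ ∈ τ} ⊕ {ρ : ι // ρ ∈ σ \ τ}) ≃ Fin d := (Equiv.sumCongr gE e₂).trans col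
  let A := Matrix.of fun p q : ({ρ : ι // ρ ∈ τ} ⊕ {ρ : ι // ρ ∈ σ \ τ}) => U (eσ p) (ecol q)
  have h1 : absDetRows U σ = |A.det| :=
    absDetRows_eq_abs_det_s1 U σ (by rw [hσ, Fintype.card_fin]) eσ eσinj eσmem ecol
  let Tβ := T.submatrix ⇑ecol ⇑ecol
  have detTβ : Tβ.det = T.det := Matrix.det_submatrix_equiv_self ecol T
  let B := A * Tβ
  have hB : ∀ p q, B p q = (U * T) (eσ p) (ecol q) := by
    intro p q
    show ∑ q', U (eσ p) (ecol q') * T (ecol q') (ecol q) = _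
    rw [Matrix.mul_apply]
    exact Equiv.sum_comp ecol (fun j => U (eσ p) j * T j (ecol q))
  let D := Matrix.of fun y y' : {ρ : ι // ρ ∈ σ \ τ} => B (Sum.inr y) (Sum.inr y')
  have hBblock : B = Matrix.fromBlocks 1 0
      (Matrix.of fun y x => B (Sum.inr y) (Sum.inl x)) D := by
    ext p q
    rcases p with x | y <;> rcases q with x' | y'
    · rw [Matrix.fromBlocks_apply₁₁, hB]
      have hrx : (U * T) (eσ (Sum.inl x)) = Pi.single (g x) 1 := hrows x
      have hc : ecol (Sum.inl x') = g x' := by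
        show col (Sum.inl (gE x')) = _
        rw [col_inl]; rfl
      rw [hc, hrx]
      rw [Matrix.one_apply]
      by_cases hxx : x = x'
      · subst hxx; simp
      · rw [if_neg hxx, Pi.single_eq_of_ne (fun h => hxx (hginj h).symm)]
    · rw [Matrix.fromBlocks_apply₁₂, hB]
      have hrx : (U * T) (eσ (Sum.inl x)) = Pi.single (g x) 1 := hrows x
      have hcol : ecol (Sum.inr y') = (e₂ y').1 := by
        show col (Sum.inr (e₂ y')) = _
        rw [col_inr]
      rw [hcol, hrx]
      have hne : (e₂ y').1 ≠ g x := by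
        intro h
        have := (e₂ y').2
        rw [h] at this
        exact absurd (hglt x) (not_lt.2 this)
      rw [Pi.single_eq_of_ne hne]
      rfl
    · rfl
    · rfl
  have hdetB : B.det = D.det := by
    rw [hBblock, Matrix.det_fromBlocks_zero₁₂, Matrix.det_one, one_mul]
  have hcards' : ((σ \ τ).subtype fun ρ => ρ ∈ N).card = Fintype.card {j : Fin d // k ≤ (j : ℕ)} := by
    have h1' : ((σ \ τ).subtype fun ρ => ρ ∈ N).card = ((σ \ τ).filter fun ρ => ρ ∈ N).card := by
      rw [← Finset.subtype_map (fun ρ => ρ ∈ N) (s := σ \ τ), Finset.card_map]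
    rw [h1', Finset.filter_true_of_mem hστ, hsd, cardκ']
  have h2 : absDetRows (starU U T N k) ((σ \ τ).subtype fun ρ => ρ ∈ N) = |D.det| := by
    have heq := absDetRows_eq_abs_det_s1 (starU U T N k) ((σ \ τ).subtype fun ρ => ρ ∈ N) hcards'
      (fun y : {ρ : ι // ρ ∈ σ \ τ} => (⟨y.1, hστ y.1 y.2⟩ : {ρ : ι // ρ ∈ N}))
      (by
        intro a b hab
        apply Subtype.ext
        exact congrArg (Subtype.val : {ρ : ι // ρ ∈ N} → ι) hab)
      (fun b => Finset.mem_subtype.2 b.2) e₂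
    rw [heq]
    have hM : (Matrix.of fun p q : {ρ : ι // ρ ∈ σ \ τ} =>
        starU U T N k (⟨p.1, hστ p.1 p.2⟩ : {ρ : ι // ρ ∈ N}) (e₂ q)) = D := by
      ext y y'
      show starU U T N k _ (e₂ y') = B (Sum.inr y) (Sum.inr y')
      rw [hB]
      have hcol : ecol (Sum.inr y') = (e₂ y').1 := by
        show col (Sum.inr (e₂ y')) = _
        rw [col_inr]
      rw [hcol]
      rfl
    rw [hM]
  rw [h1, h2, ← hdetB, Matrix.det_mul, abs_mul, detTβ, mul_comm]

/-- (Restriction to a coordinate subspace.) Let `τ ∈ Σ(k)` and let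
`T_τ` be an invertible matrix such that the rows of `U·T_τ` indexed by `τ` are the
first `k` standard basis vectors; let `c_τ = |det T_τ|` and let `U_τ` be the ray matrix
of the star fan `Σ_τ` (the last `d-k` columns of `U·T_τ` on the rows indexed by `nb(τ)`).
Then the restriction of `Adj_{Σ,U}` to `Λ_τ = {x_ρ = 0, ρ ∈ τ}` equals
`c_τ⁻¹ · (∏_{ρ ∉ nb(τ), ρ ∉ τ} x_ρ) · Adj_{Σ_τ,U_τ}`. -/
theorem statement1 {ι : Type*} [Fintype ι] [DecidableEq ι] {d k : ℕ}
    (F : SimplicialFan ι (Fin d)) (hrank : F.U.rank = d)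
    (τ : Finset ι) (hτ : τ ∈ F.cones) (hcard : τ.card = k)
    (T : Matrix (Fin d) (Fin d) ℝ) (hdet : T.det ≠ 0) (hT : RowsStd F.U T τ k) :
    restrictTo τ (Adj F.U F.cones) =
      MvPolynomial.C |T.det|⁻¹ * (∏ ρ ∈ (nbF F.cones τ ∪ τ)ᶜ, MvPolynomial.X ρ) *
        MvPolynomial.rename Subtype.val
          (Adj (starU F.U T (nbF F.cones τ) k) (starCones F.cones τ (nbF F.cones τ))) := by
  classical
  obtain ⟨g, hginj, hglt, hrows⟩ := hT
  set N := nbF F.cones τ with hN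
  have hτN : ∀ ρ ∈ N, ρ ∉ τ := fun ρ hρ => ((Finset.mem_filter.1 hρ).2).1
  have hdiffN : ∀ σ ∈ F.cones, τ ⊆ σ → ∀ ρ ∈ σ \ τ, ρ ∈ N := by
    intro σ hσ hsub ρ hρ
    rw [Finset.mem_sdiff] at hρ
    refine Finset.mem_filter.2 ⟨Finset.mem_univ _, hρ.2, F.downward σ hσ _ ?_⟩
    intro x hx
    rcases Finset.mem_insert.1 hx with h | h
    · exact h ▸ hρ.1
    · exact hsub h
  have hkd : k ≤ d := by
    have := Fintype.card_le_of_injective g hginj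
    rwa [Fintype.card_coe, hcard, Fintype.card_fin] at this
  have cardκ' : Fintype.card {j : Fin d // k ≤ (j : ℕ)} = d - k := card_subtype_le hkd
  have hsubcard : ∀ σ, τ ⊆ σ → σ ∈ F.cones →
      ((σ \ τ).subtype fun ρ => ρ ∈ N).card = (σ \ τ).card := by
    intro σ hsub hσc
    rw [← Finset.card_map (Function.Embedding.subtype fun ρ => ρ ∈ N), Finset.subtype_map,
      Finset.filter_true_of_mem (hdiffN σ hσc hsub)]
  -- rewrite the left-hand side
  rw [Adj, map_sum]
  have hterm : ∀ σ ∈ F.cones.filter fun σ => σ.card = Fintype.card (Fin d),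
      restrictTo τ (MvPolynomial.C (absDetRows F.U σ) * ∏ ρ ∈ σᶜ, MvPolynomial.X ρ) =
      if τ ⊆ σ then MvPolynomial.C (absDetRows F.U σ) * ∏ ρ ∈ σᶜ, MvPolynomial.X ρ else 0 := by
    intro σ _
    rw [map_mul, map_prod]
    have hC : restrictTo τ (MvPolynomial.C (absDetRows F.U σ) : MvPolynomial ι ℝ) =
        MvPolynomial.C (absDetRows F.U σ) := by
      simp [restrictTo]
    rw [hC]
    by_cases hsub : τ ⊆ σ
    · rw [if_pos hsub]
      congr 1
      apply Finset.prod_congr rfl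
      intro ρ hρ
      have hρτ : ρ ∉ τ := fun h => (Finset.mem_compl.1 hρ) (hsub h)
      simp [restrictTo, hρτ]
    · rw [if_neg hsub]
      obtain ⟨ρ, hρτ, hρσ⟩ := Finset.not_subset.1 hsub
      rw [Finset.prod_eq_zero (Finset.mem_compl.2 hρσ) (by simp [restrictTo, hρτ]), mul_zero]
  rw [Finset.sum_congr rfl hterm, Finset.sum_ite, Finset.sum_const_zero, add_zero]
  -- rewrite the right-hand side
  rw [Adj, map_sum, Finset.mul_sum]
  -- match the two sums termwise
  refine Finset.sum_bij (fun σ _ => (σ \ τ).subtype fun ρ => ρ ∈ N) ?_ ?_ ?_ ?_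
  · intro σ hσA
    simp only [Finset.mem_filter] at hσA ⊢
    obtain ⟨⟨hσc, hσd⟩, hsub⟩ := hσA
    refine ⟨Finset.mem_image.2 ⟨σ, Finset.mem_filter.2 ⟨hσc, hsub⟩, rfl⟩, ?_⟩
    rw [hsubcard σ hsub hσc, Finset.card_sdiff_of_subset hsub, hσd, hcard, Fintype.card_fin, cardκ']
  · intro σ₁ h₁ σ₂ h₂ heq
    simp only [Finset.mem_filter] at h₁ h₂
    have e1 : σ₁ \ τ = σ₂ \ τ := by
      have h3 := congrArg (Finset.map (Function.Embedding.subtype fun ρ => ρ ∈ N)) heq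
      rwa [Finset.subtype_map, Finset.subtype_map,
        Finset.filter_true_of_mem (hdiffN σ₁ h₁.1.1 h₁.2),
        Finset.filter_true_of_mem (hdiffN σ₂ h₂.1.1 h₂.2)] at h3
    have h4 : τ ∪ σ₁ \ τ = τ ∪ σ₂ \ τ := by rw [e1]
    rwa [Finset.union_sdiff_of_subset h₁.2, Finset.union_sdiff_of_subset h₂.2] at h4
  · intro σ' hσ'
    simp only [Finset.mem_filter] at hσ'
    obtain ⟨hmem, hcard'⟩ := hσ'
    obtain ⟨σ, hσf, rfl⟩ := Finset.mem_image.1 hmem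
    simp only [Finset.mem_filter] at hσf
    obtain ⟨hσc, hsub⟩ := hσf
    refine ⟨σ, Finset.mem_filter.2 ⟨Finset.mem_filter.2 ⟨hσc, ?_⟩, hsub⟩, rfl⟩
    have h5 : (σ \ τ).card = d - k := by
      rw [← hsubcard σ hsub hσc, hcard', cardκ']
    have h6 := Finset.card_sdiff_add_card_eq_card hsub
    rw [Fintype.card_fin]
    omega
  · intro σ hσA
    simp only [Finset.mem_filter] at hσA
    obtain ⟨⟨hσc, hσd⟩, hsub⟩ := hσA
    have hσd' : σ.card = d := by rwa [Fintype.card_fin] at hσd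
    have hdiff : ∀ ρ ∈ σ \ τ, ρ ∈ N := hdiffN σ hσc hsub
    rw [map_mul, MvPolynomial.rename_C, map_prod]
    simp only [MvPolynomial.rename_X]
    have hkey := key_det F.U T τ σ N hsub hdiff hσd' hcard g hginj hglt hrows
    have habs : |T.det| ≠ 0 := abs_ne_zero.2 hdet
    have hcoef : absDetRows F.U σ =
        |T.det|⁻¹ * absDetRows (starU F.U T N k) ((σ \ τ).subtype fun ρ => ρ ∈ N) := by
      rw [← hkey]
      field_simp
    have hprod : (∏ ρ ∈ σᶜ, MvPolynomial.X ρ : MvPolynomial ι ℝ) =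
        (∏ ρ ∈ (N ∪ τ)ᶜ, MvPolynomial.X ρ) *
          ∏ ρ' ∈ ((σ \ τ).subtype fun ρ => ρ ∈ N)ᶜ, MvPolynomial.X (ρ' : ι) := by
      have hc : ((σ \ τ).subtype fun ρ => ρ ∈ N)ᶜ = (N \ σ).subtype fun ρ => ρ ∈ N := by
        ext ρ'
        simp only [Finset.mem_compl, Finset.mem_subtype, Finset.mem_sdiff]
        have hρN := ρ'.2
        constructor
        · intro h
          exact ⟨hρN, fun hσρ => h ⟨hσρ, hτN _ hρN⟩⟩
        · intro h hmemp
          exact h.2 hmemp.1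
      rw [hc]
      have h2 : (∏ ρ' ∈ (N \ σ).subtype fun ρ => ρ ∈ N, MvPolynomial.X (ρ' : ι) :
          MvPolynomial ι ℝ) = ∏ ρ ∈ N \ σ, MvPolynomial.X ρ := by
        have hft : (N \ σ).filter (fun ρ => ρ ∈ N) = N \ σ :=
          Finset.filter_true_of_mem fun ρ hρ => (Finset.mem_sdiff.1 hρ).1
        conv_rhs => rw [← hft, ← Finset.subtype_map, Finset.prod_map]
        rfl
      rw [h2]
      have hsplit : σᶜ = (N ∪ τ)ᶜ ∪ (N \ σ) := by
        ext ρ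
        simp only [Finset.mem_compl, Finset.mem_union, Finset.mem_sdiff, not_or]
        constructor
        · intro h
          by_cases hρN : ρ ∈ N
          · exact Or.inr ⟨hρN, h⟩
          · exact Or.inl ⟨hρN, fun hτ' => h (hsub hτ')⟩
        · rintro (⟨h1, h2'⟩ | ⟨h1, h2'⟩)
          · intro hρσ
            by_cases hρτ : ρ ∈ τ
            · exact h2' hρτ
            · exact h1 (hdiff ρ (Finset.mem_sdiff.2 ⟨hρσ, hρτ⟩))
          · exact h2'
      have hdisj : Disjoint ((N ∪ τ)ᶜ) (N \ σ) := by
        rw [Finset.disjoint_left]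
        intro ρ hρ hρ'
        exact (Finset.mem_compl.1 hρ) (Finset.mem_union_left _ (Finset.mem_sdiff.1 hρ').1)
      rw [hsplit, Finset.prod_union hdisj]
    rw [hcoef, hprod, map_mul]
    ring
end

section
/- Let Σ be a simplicial polyhedral fan in ℝ^d with n rays and ray matrix U ∈ ℝ^{n×d} of rank d, and let Σ̄ ⊆ Σ be the subfan consisting of all d-dimensional cones of Σ and their faces, with ray matrix Ū the submatrix of U indexed by Σ̄(1). Then Adj_{Σ,U} = (∏_{ρ ∈ Σ(1)∖Σ̄(1)} x_ρ) · Adj_{Σ̄,Ū}, and the hypersurface A_Σ contains the union (∪_{ρ ∈ Σ(1)∖Σ̄(1)} Λ_ρ) ∪ V(B(Σ̄)); that is, [Λ_ρ] ∈ F_{n−2}(A_Σ) for every ρ ∈ Σ(1)∖Σ̄(1), and [Λ_J] ∈ F_{n−1−|J|}(A_Σ) for every J ∈ Σ̄^c. -/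
open MvPolynomial Finset MeasureTheory
open scoped ENNReal

lemma absDetRows_eq_of' {ι ι' κ : Type*} [Fintype κ] [DecidableEq κ]
    (U : Matrix ι κ ℝ) (U' : Matrix ι' κ ℝ) (σ : Finset ι) (σ' : Finset ι')
    (h : σ.card = Fintype.card κ) (h' : σ'.card = Fintype.card κ)
    (w : {x // x ∈ σ'} ≃ {x // x ∈ σ})
    (hw : ∀ x : {x // x ∈ σ'}, U' x.1 = U (w x).1) :
    absDetRows U' σ' = absDetRows U σ := by
  rw [absDetRows, absDetRows, dif_pos h, dif_pos h']
  set E₁ : κ ≃ {x // x ∈ σ} := (Fintype.equivFinOfCardEq h.symm).trans σ.equivFin.symm with hE₁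
  set E₂ : κ ≃ {x // x ∈ σ'} := (Fintype.equivFinOfCardEq h'.symm).trans σ'.equivFin.symm with hE₂
  set M₁ : Matrix κ κ ℝ := Matrix.of fun j k => U (E₁ j).1 k with hM₁
  have : (Matrix.of fun j k : κ =>
      U' ((σ'.equivFin.symm (Fintype.equivFinOfCardEq h'.symm j)) : ι') k)
      = M₁.submatrix ((E₂.trans w).trans E₁.symm) (Equiv.refl κ) := by
    ext j k
    simp only [Matrix.of_apply, Matrix.submatrix_apply, hM₁, Equiv.trans_apply,
      Equiv.apply_symm_apply, Equiv.refl_apply]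
    rw [hw]
    rfl
  rw [this, Matrix.abs_det_submatrix_equiv_equiv]
  rfl

set_option maxHeartbeats 1000000 in
/-- Let `Σ̄ ⊆ Σ` be the subfan of all `d`-dimensional cones and their
faces, with set of rays `R = Σ̄(1)` and ray matrix `Ū` the corresponding submatrix of `U`.
Then `Adj_{Σ,U} = (∏_{ρ ∈ Σ(1)∖Σ̄(1)} x_ρ) · Adj_{Σ̄,Ū}`, and the adjoint hypersurface
contains the coordinate hyperplane `Λ_ρ` for every `ρ ∈ Σ(1)∖Σ̄(1)` as well as the
coordinate subspace `Λ_J` for every `J ∈ Σ̄ᶜ`. -/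
theorem statement8 {ι κ : Type*} [Fintype ι] [DecidableEq ι] [Fintype κ] [DecidableEq κ]
    (F : SimplicialFan ι κ) (hrank : F.U.rank = Fintype.card κ) :
    (Adj F.U F.cones =
      (∏ ρ ∈ ((F.cones.filter fun σ => σ.card = Fintype.card κ).sup id)ᶜ, MvPolynomial.X ρ) *
        MvPolynomial.rename Subtype.val
          (Adj (fun (ρ : {ρ : ι // ρ ∈ (F.cones.filter fun σ => σ.card = Fintype.card κ).sup id}) (j : κ) => F.U ρ.1 j)
            (F.cones.image fun σ =>
              σ.subtype fun ρ => ρ ∈ (F.cones.filter fun σ => σ.card = Fintype.card κ).sup id))) ∧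
    (∀ ρ : ι, ρ ∉ (F.cones.filter fun σ => σ.card = Fintype.card κ).sup id →
      ∀ x : ι → ℂ, x ρ = 0 → MvPolynomial.aeval x (Adj F.U F.cones) = 0) ∧
    ∀ J : Finset ι, (↑J : Set ι) ⊆ ↑((F.cones.filter fun σ => σ.card = Fintype.card κ).sup id) →
      (∀ σ ∈ F.cones, σ.card = Fintype.card κ → ¬ J ⊆ σ) →
      ∀ x : ι → ℂ, (∀ ρ ∈ J, x ρ = 0) → MvPolynomial.aeval x (Adj F.U F.cones) = 0 := by
  classical
  set d := Fintype.card κ with hd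
  set S := F.cones.filter fun σ => σ.card = d with hS
  set R := S.sup id with hRdef
  letI instF : Fintype {ρ : ι // ρ ∈ R} := Subtype.fintype fun ρ => ρ ∈ R
  set f : Finset ι → Finset {ρ : ι // ρ ∈ R} := fun σ => σ.subtype fun ρ => ρ ∈ R with hf
  have hsubR : ∀ σ ∈ S, σ ⊆ R := fun σ hσ => Finset.le_sup (f := id) hσ
  have hcard : ∀ σ ∈ F.cones, σ.card ≤ d := by
    intro σ hσ
    have h1 := (F.indep σ hσ).fintype_card_le_finrank
    rwa [Module.finrank_pi, Fintype.card_coe] at h1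
  have hcardf : ∀ σ ∈ S, (f σ).card = d := by
    intro σ hσ
    rw [hf]
    rw [Finset.card_subtype, Finset.filter_true_of_mem (fun x hx => hsubR σ hσ hx)]
    exact (Finset.mem_filter.1 hσ).2
  refine ⟨?_, ?_, ?_⟩
  · have himg : ((F.cones.image f).filter fun t => t.card = d) = S.image f := by
      ext t
      constructor
      · intro ht
        obtain ⟨ht1, ht2⟩ := Finset.mem_filter.1 ht
        obtain ⟨σ, hσ, rfl⟩ := Finset.mem_image.1 ht1
        refine Finset.mem_image.2 ⟨σ, Finset.mem_filter.2 ⟨hσ, ?_⟩, rfl⟩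
        have h1 : (f σ).card ≤ σ.card := by
          rw [hf, Finset.card_subtype]; exact Finset.card_filter_le _ _
        exact le_antisymm (hcard σ hσ) (ht2 ▸ h1)
      · intro ht
        obtain ⟨σ, hσ, rfl⟩ := Finset.mem_image.1 ht
        exact Finset.mem_filter.2
          ⟨Finset.mem_image.2 ⟨σ, (Finset.mem_filter.1 hσ).1, rfl⟩, hcardf σ hσ⟩
    have hinj : ∀ σ₁ ∈ S, ∀ σ₂ ∈ S, f σ₁ = f σ₂ → σ₁ = σ₂ := by
      intro σ₁ h₁ σ₂ h₂ hfe
      have e1 := Finset.subtype_map_of_mem (fun x hx => hsubR σ₁ h₁ hx)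
      have e2 := Finset.subtype_map_of_mem (fun x hx => hsubR σ₂ h₂ hx)
      rw [← e1, ← e2]
      exact congrArg _ hfe
    unfold Adj; rw [himg, Finset.sum_image hinj, map_sum, Finset.mul_sum]
    refine Finset.sum_congr rfl fun σ hσ => ?_
    have hσR : σ ⊆ R := hsubR σ hσ
    have hσd : σ.card = d := (Finset.mem_filter.1 hσ).2
    have hdet : absDetRows (fun (ρ : {ρ : ι // ρ ∈ R}) (j : κ) => F.U ρ.1 j) (f σ)
        = absDetRows F.U σ := by
      refine absDetRows_eq_of' F.U _ σ (f σ) hσd (hcardf σ hσ)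
        ⟨fun x => ⟨x.1.1, Finset.mem_subtype.1 x.2⟩,
         fun y => ⟨⟨y.1, hσR y.2⟩, Finset.mem_subtype.2 y.2⟩,
         fun x => by ext; rfl, fun y => rfl⟩ (fun x => rfl)
    have hprodc : (∏ x ∈ (f σ)ᶜ, (MvPolynomial.X x.1 : MvPolynomial ι ℝ))
        = ∏ ρ ∈ R \ σ, MvPolynomial.X ρ := by
      refine Finset.prod_bij (fun a _ => a.1) ?_ ?_ ?_ ?_
      · intro a ha
        refine Finset.mem_sdiff.2 ⟨a.2, fun h => ?_⟩
        exact (Finset.mem_compl.1 ha) (Finset.mem_subtype.2 h)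
      · intro a _ b _ hab
        exact Subtype.ext hab
      · intro b hb
        obtain ⟨hbR, hbσ⟩ := Finset.mem_sdiff.1 hb
        exact ⟨⟨b, hbR⟩, Finset.mem_compl.2 (fun h => hbσ (Finset.mem_subtype.1 h)), rfl⟩
      · intro a _; rfl
    have hsplit : σᶜ = Rᶜ ∪ (R \ σ) := by
      ext ρ
      simp only [Finset.mem_compl, Finset.mem_union, Finset.mem_sdiff]
      by_cases h : ρ ∈ R
      · constructor
        · intro h'; exact Or.inr ⟨h, h'⟩
        · rintro (h' | h') h''
          · exact h' h
          · exact h'.2 h''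
      · constructor
        · intro _; exact Or.inl h
        · intro _ h''; exact h (hσR h'')
    have hdisj : Disjoint Rᶜ (R \ σ) := by
      rw [Finset.disjoint_left]
      intro a ha hb
      exact (Finset.mem_compl.1 ha) (Finset.mem_sdiff.1 hb).1
    rw [map_mul, MvPolynomial.rename_C, map_prod]
    simp only [MvPolynomial.rename_X]
    rw [hdet, hprodc, hsplit, Finset.prod_union hdisj]
    ring
  · intro ρ hρ x hx
    rw [Adj, map_sum]
    apply Finset.sum_eq_zero
    intro σ hσ
    rw [map_mul, map_prod]
    have hρσ : ρ ∈ σᶜ := Finset.mem_compl.2 fun h => hρ (hsubR σ hσ h)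
    rw [Finset.prod_eq_zero hρσ (by simp [hx]), mul_zero]
  · intro J hJR hJ x hx
    rw [Adj, map_sum]
    apply Finset.sum_eq_zero
    intro σ hσ
    rw [map_mul, map_prod]
    obtain ⟨hσc, hcardσ⟩ := Finset.mem_filter.1 hσ
    obtain ⟨ρ, hρJ, hρσ⟩ := Finset.not_subset.1 (hJ σ hσc hcardσ)
    rw [Finset.prod_eq_zero (Finset.mem_compl.2 hρσ) (by simp [hx ρ hρJ]), mul_zero]
end

section
/- Let P ⊆ ℝ^d be a full-dimensional simple convex polytope with n facets, normal fan Σ = Σ_P, and ray matrix U ∈ ℝ^{n×d}. Then the universal adjoint hypersurface A_P = {x ∈ ℙ^{n−1} : Adj_P(x) = 0} is the unique hypersurface of degree n−d satisfying: (1) Λ_J ⊆ A_P for each primitive collection J ∈ Σ^c, and (2) Λ_e ∩ H_e ⊆ A_P for each edge e of P, where H_e = {x : u_{v_e^1}·x_{Q_e^2} + u_{v_e^2}·x_{Q_e^1} = 0}. That is, any homogeneous polynomial f of degree n−d vanishing on all the subspaces Λ_J and Λ_e ∩ H_e is a scalar multiple of Adj_P. -/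
open MvPolynomial Finset MeasureTheory
open scoped ENNReal

namespace St9

variable {ι : Type*} [Fintype ι] [DecidableEq ι]

noncomputable def monExp (s : Finset ι) : ι →₀ ℕ := ∑ ρ ∈ s, Finsupp.single ρ 1

lemma monExp_apply (s : Finset ι) (j : ι) : monExp s j = if j ∈ s then 1 else 0 := by
  classical
  rw [monExp, Finset.sum_apply']
  simp [Finsupp.single_apply, Finset.sum_ite_eq' s j (fun _ => 1)]

lemma monExp_injective : Function.Injective (monExp (ι := ι)) := by
  intro s t h
  ext j
  have := congrArg (fun m : ι →₀ ℕ => m j) h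
  simp only [monExp_apply] at this
  by_cases hs : j ∈ s <;> by_cases ht : j ∈ t <;> simp_all

lemma monExp_support (s : Finset ι) : (monExp s).support = s := by
  ext j; simp [Finsupp.mem_support_iff, monExp_apply]

lemma monExp_degree (s : Finset ι) : (monExp s).degree = s.card := by
  rw [show (monExp s).degree = ∑ i ∈ (monExp s).support, monExp s i from rfl, monExp_support]
  simp [monExp_apply]

lemma monExp_insert (a : ι) (s : Finset ι) (ha : a ∉ s) :
    monExp (insert a s) = Finsupp.single a 1 + monExp s := by
  simp only [monExp]; rw [Finset.sum_insert ha]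

lemma prodX_eq {R : Type*} [CommSemiring R] (s : Finset ι) :
    (∏ ρ ∈ s, (X ρ : MvPolynomial ι R)) = monomial (monExp s) 1 := by
  classical
  induction s using Finset.induction_on with
  | empty => simp [monExp]
  | @insert a s' ha ih =>
    rw [Finset.prod_insert ha, ih, monExp_insert a s' ha,
      show (X a : MvPolynomial ι R) = monomial (Finsupp.single a 1) 1 from rfl,
      monomial_mul, one_mul]

lemma eval_monExp {R : Type*} [CommSemiring R] (s : Finset ι) (a : R) (x : ι → R) :
    eval x (monomial (monExp s) a) = a * ∏ ρ ∈ s, x ρ := by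
  rw [eval_monomial, Finsupp.prod]
  congr 1
  rw [monExp_support]
  exact Finset.prod_congr rfl fun ρ hρ => by rw [monExp_apply, if_pos hρ, pow_one]

lemma coeff_monExp_monomial {R : Type*} [CommSemiring R] (s t : Finset ι) (a : R) :
    coeff (monExp s) (monomial (monExp t) a) = if t = s then a else 0 := by
  rw [coeff_monomial]
  congr 1
  simp [monExp_injective.eq_iff]

/-- If `f` vanishes on the coordinate subspace `{x_ρ = 0, ρ ∈ J}`, all its
coefficients on monomials avoiding `J` vanish. -/
lemma coeff_eq_zero_of_vanish {f : MvPolynomial ι ℂ} {J : Finset ι}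
    (hv : ∀ x : ι → ℂ, (∀ ρ ∈ J, x ρ = 0) → eval x f = 0)
    {m : ι →₀ ℕ} (hm : ∀ ρ ∈ J, m ρ = 0) : coeff m f = 0 := by
  classical
  set g : ι → MvPolynomial ι ℂ := fun ρ => if ρ ∈ J then 0 else X ρ with hg
  have hφ : (bind₁ g) f = 0 := by
    apply MvPolynomial.funext
    intro x
    have : eval x ((bind₁ g) f) = eval (fun i => eval x (g i)) f := by
      rw [show (eval x : MvPolynomial ι ℂ →+* ℂ) = eval₂Hom (RingHom.id ℂ) x from rfl,
        eval₂Hom_bind₁]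
      rfl
    rw [this, map_zero]
    apply hv
    intro ρ hρ
    simp [hg, if_pos hρ]
  have key : coeff m ((bind₁ g) f) = coeff m f := by
    conv_lhs => rw [f.as_sum]
    rw [map_sum, MvPolynomial.coeff_sum]
    have hterm : ∀ m' ∈ f.support,
        coeff m ((bind₁ g) (monomial m' (coeff m' f))) =
          if m' = m then coeff m f else 0 := by
      intro m' _
      by_cases hJ : ∀ ρ ∈ J, m' ρ = 0
      · have : (bind₁ g) (monomial m' (coeff m' f)) = monomial m' (coeff m' f) := by
          rw [bind₁_monomial]
          rw [monomial_eq]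
          congr 1
          rw [Finsupp.prod]
          apply Finset.prod_congr rfl
          intro ρ hρ
          have : ρ ∉ J := fun hc => (Finsupp.mem_support_iff.mp hρ) (hJ ρ hc)
          simp [hg, this]
        rw [this, coeff_monomial]
        split <;> simp_all
      · push_neg at hJ
        obtain ⟨ρ₀, hρ₀J, hρ₀⟩ := hJ
        have : (bind₁ g) (monomial m' (coeff m' f)) = 0 := by
          rw [bind₁_monomial]
          have hmem : ρ₀ ∈ m'.support := Finsupp.mem_support_iff.mpr hρ₀
          rw [Finset.prod_eq_zero hmem]
          · ring
          · simp [hg, if_pos hρ₀J, zero_pow hρ₀]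
        rw [this, coeff_zero]
        have : m' ≠ m := by
          rintro rfl
          exact hρ₀ (hm ρ₀ hρ₀J)
        simp [this]
    rw [Finset.sum_congr rfl hterm, Finset.sum_ite_eq' f.support m (fun _ => coeff m f)]
    split
    · rfl
    · rw [MvPolynomial.notMem_support_iff.mp ‹_›]
  rw [← key, hφ, coeff_zero]

/-- Every "non-face" contains a minimal non-face. -/
lemma exists_minimal_nonface (cones : Finset (Finset ι)) (S : Finset ι)
    (hS : ∀ σ ∈ cones, ¬ S ⊆ σ) :
    ∃ J ⊆ S, (∀ σ ∈ cones, ¬ J ⊆ σ) ∧ ∀ ρ ∈ J, ∃ σ ∈ cones, J.erase ρ ⊆ σ := by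
  classical
  set T := S.powerset.filter (fun J => ∀ σ ∈ cones, ¬ J ⊆ σ) with hT
  have hTne : T.Nonempty :=
    ⟨S, by rw [hT, Finset.mem_filter, Finset.mem_powerset]; exact ⟨Finset.Subset.refl S, hS⟩⟩
  obtain ⟨J, hJT, hmin⟩ := T.exists_min_image Finset.card hTne
  rw [hT, Finset.mem_filter, Finset.mem_powerset] at hJT
  refine ⟨J, hJT.1, hJT.2, ?_⟩
  intro ρ hρ
  by_contra hc
  push_neg at hc
  have hmem : J.erase ρ ∈ T := by
    rw [hT, Finset.mem_filter, Finset.mem_powerset]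
    exact ⟨(Finset.erase_subset ρ J).trans hJT.1, hc⟩
  have := hmin _ hmem
  have hlt : (J.erase ρ).card < J.card := Finset.card_erase_lt_of_mem hρ
  omega

section Generic

variable {κ : Type*} [Fintype κ] [DecidableEq κ]

lemma linform_ne_zero (w : κ → ℝ) (hw : w ≠ 0) :
    (∑ j, (C (w j) * X j : MvPolynomial κ ℝ)) ≠ 0 := by
  obtain ⟨j, hj⟩ := Function.ne_iff.mp hw
  intro h
  have h2 := congrArg (coeff (Finsupp.single j 1)) h
  rw [MvPolynomial.coeff_sum] at h2
  simp only [coeff_C_mul, coeff_X', coeff_zero] at h2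
  rw [Finset.sum_eq_single j] at h2
  · simp at h2; exact hj h2
  · intro b _ hb
    rw [if_neg (by simpa [Finsupp.single_left_inj (one_ne_zero (α := ℕ))] using hb), mul_zero]
  · simp
  
lemma exists_generic (s : Finset (κ → ℝ)) (hs : ∀ w ∈ s, w ≠ 0) :
    ∃ u : κ → ℝ, ∀ w ∈ s, (∑ j, w j * u j) ≠ 0 := by
  by_contra hc
  push_neg at hc
  have hev : ∀ u : κ → ℝ, eval u (∏ w ∈ s, ∑ j, (C (w j) * X j : MvPolynomial κ ℝ)) = 0 := by
    intro u
    obtain ⟨w, hw, h0⟩ := hc u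
    rw [map_prod]
    apply Finset.prod_eq_zero hw
    simpa using h0
  have hzero : (∏ w ∈ s, ∑ j, (C (w j) * X j : MvPolynomial κ ℝ)) = 0 :=
    MvPolynomial.funext (by simpa using hev)
  exact (Finset.prod_ne_zero_iff.mpr (fun w hw => linform_ne_zero w (hs w hw))) hzero

lemma eq_zero_of_dot_basis {α : Type*} [Fintype α] (v : α → (κ → ℝ))
    (hli : LinearIndependent ℝ v) (hcard : Fintype.card α = Fintype.card κ)
    (w : κ → ℝ) (hw : ∀ a, ∑ j, v a j * w j = 0) : w = 0 := by
  have hspan : Submodule.span ℝ (Set.range v) = ⊤ :=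
    hli.span_eq_top_of_card_eq_finrank'
      (by rw [hcard, Module.finrank_fintype_fun_eq_card])
  let φ : (κ → ℝ) →ₗ[ℝ] ℝ :=
    { toFun := fun x => ∑ j, x j * w j
      map_add' := by intros; simp [add_mul, Finset.sum_add_distrib]
      map_smul' := by intros; simp [Finset.mul_sum, mul_assoc] }
  have hker : ∀ x : κ → ℝ, φ x = 0 := by
    intro x
    have hx : x ∈ Submodule.span ℝ (Set.range v) := by rw [hspan]; exact Submodule.mem_top
    have hsub : Set.range v ⊆ (LinearMap.ker φ : Set _) := by
      rintro _ ⟨a, rfl⟩; exact hw a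
    exact Submodule.span_le.mpr hsub hx
  have hww : ∑ j, w j * w j = 0 := hker w
  funext j
  have hsq : ∀ j ∈ Finset.univ (α := κ), 0 ≤ w j * w j := fun j _ => mul_self_nonneg _
  have := (Finset.sum_eq_zero_iff_of_nonneg hsq).mp hww j (Finset.mem_univ j)
  have := mul_self_eq_zero.mp this
  simpa using this

lemma absDetRows_ne_zero {ι : Type*} (U : Matrix ι κ ℝ) (σ : Finset ι)
    (h : σ.card = Fintype.card κ)
    (hli : LinearIndependent ℝ (fun i : σ => U i.1)) : absDetRows U σ ≠ 0 := by
  rw [absDetRows, dif_pos h]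
  set e : κ → {x // x ∈ σ} := fun j => σ.equivFin.symm (Fintype.equivFinOfCardEq h.symm j)
    with he
  have hinj : Function.Injective e :=
    σ.equivFin.symm.injective.comp (Fintype.equivFinOfCardEq h.symm).injective
  have hli2 : LinearIndependent ℝ (fun j : κ => U (e j).1) := hli.comp e hinj
  have : IsUnit (Matrix.of fun j k : κ => U (e j).1 k) :=
    Matrix.linearIndependent_rows_iff_isUnit.mp hli2
  have hdet := (Matrix.isUnit_iff_isUnit_det _).mp this
  simpa using hdet.ne_zero

end Generic

lemma prod_almost_one {R : Type*} [CommRing R] (s : Finset ι) (x : ι → R) (ρ₁ ρ₂ : ι)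
    (hne : ρ₁ ≠ ρ₂) (hx : ∀ ρ ∈ s, ρ ≠ ρ₁ → ρ ≠ ρ₂ → x ρ = 1) :
    ∏ ρ ∈ s, x ρ = (if ρ₁ ∈ s then x ρ₁ else 1) * (if ρ₂ ∈ s then x ρ₂ else 1) := by
  classical
  have hsplit : ∀ ρ ∈ s, x ρ = (if ρ = ρ₁ then x ρ₁ else 1) * (if ρ = ρ₂ then x ρ₂ else 1) := by
    intro ρ hρ
    by_cases h1 : ρ = ρ₁
    · subst h1; rw [if_pos rfl, if_neg hne, mul_one]
    · by_cases h2 : ρ = ρ₂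
      · subst h2; rw [if_neg h1, if_pos rfl, one_mul]
      · rw [if_neg h1, if_neg h2, mul_one]; exact hx ρ hρ h1 h2
  rw [Finset.prod_congr rfl hsplit, Finset.prod_mul_distrib,
    Finset.prod_ite_eq' s ρ₁ (fun _ => x ρ₁), Finset.prod_ite_eq' s ρ₂ (fun _ => x ρ₂)]

section Geometry

variable {ι κ : Type*} [Fintype ι] [DecidableEq ι] [Fintype κ] [DecidableEq κ]

open scoped Classical in
noncomputable def tightSet (F : SimplicialFan ι κ) (z : ι → ℝ) (y : κ → ℝ) : Finset ι :=
  Finset.univ.filter fun i => (∑ j, F.U i j * y j) + z i = 0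

variable (F : SimplicialFan ι κ) (z : ι → ℝ)

lemma mem_tightSet {y : κ → ℝ} {i : ι} :
    i ∈ tightSet F z y ↔ (∑ j, F.U i j * y j) + z i = 0 := by
  simp [tightSet]

lemma tightSet_mem_cones (hz : IsNormalFanOf F z) {y : κ → ℝ} (hy : y ∈ Pz F.U z) :
    tightSet F z y ∈ F.cones :=
  (hz.2.2 _).mpr ⟨y, hy, fun i hi => (mem_tightSet F z).mp hi⟩

lemma subset_tightSet {σ : Finset ι} {y : κ → ℝ} (hy : y ∈ faceOf F.U z σ) :
    σ ⊆ tightSet F z y := fun i hi => (mem_tightSet F z).mpr (hy.2 i hi)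

lemma card_cone_le {σ : Finset ι} (hσ : σ ∈ F.cones) : σ.card ≤ Fintype.card κ := by
  have h := (F.indep σ hσ).fintype_card_le_finrank
  rwa [Fintype.card_coe, Module.finrank_fintype_fun_eq_card] at h

lemma tightSet_eq (hz : IsNormalFanOf F z) {σ : Finset ι} (hσ : σ ∈ F.cones)
    (hcard : σ.card = Fintype.card κ) {y : κ → ℝ} (hy : y ∈ faceOf F.U z σ) :
    tightSet F z y = σ := by
  refine (Finset.eq_of_subset_of_card_le (subset_tightSet F z hy) ?_).symm
  rw [hcard]
  exact card_cone_le F (tightSet_mem_cones F z hz hy.1)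

lemma faceOf_subsingleton {σ : Finset ι} (hσ : σ ∈ F.cones)
    (hcard : σ.card = Fintype.card κ) {y y' : κ → ℝ}
    (hy : y ∈ faceOf F.U z σ) (hy' : y' ∈ faceOf F.U z σ) : y = y' := by
  have h0 : ∀ i : {x // x ∈ σ}, ∑ j, F.U i.1 j * (y j - y' j) = 0 := by
    intro i
    have h1 := hy.2 i.1 i.2
    have h2 := hy'.2 i.1 i.2
    have heq : ∑ j, F.U i.1 j * (y j - y' j)
        = (∑ j, F.U i.1 j * y j) - (∑ j, F.U i.1 j * y' j) := by
      rw [← Finset.sum_sub_distrib]; exact Finset.sum_congr rfl fun j _ => by ring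
    rw [heq]; linarith
  have hzero := eq_zero_of_dot_basis (fun i : {x // x ∈ σ} => F.U i.1)
    (F.indep σ hσ) (by rw [Fintype.card_coe, hcard]) _ h0
  funext j
  have := congrFun hzero j
  simp only [Pi.zero_apply] at this
  linarith

open scoped Classical in
noncomputable def vtx (F : SimplicialFan ι κ) (z : ι → ℝ) (σ : Finset ι) : κ → ℝ :=
  if h : (faceOf F.U z σ).Nonempty then h.choose else 0

lemma vtx_mem (hz : IsNormalFanOf F z) {σ : Finset ι} (hσ : σ ∈ F.cones) :
    vtx F z σ ∈ faceOf F.U z σ := by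
  have h : (faceOf F.U z σ).Nonempty := (hz.2.2 σ).mp hσ
  rw [vtx, dif_pos h]; exact h.choose_spec

lemma exists_neg_dir (hb : Bornology.IsBounded (Pz F.U z)) {y₀ : κ → ℝ}
    (hy₀ : y₀ ∈ Pz F.U z) {w : κ → ℝ} (hw : w ≠ 0) :
    ∃ i, ∑ j, F.U i j * w j < 0 := by
  by_contra hcon
  push_neg at hcon
  obtain ⟨C, hC⟩ := isBounded_iff_forall_norm_le.mp hb
  have hwn : (0:ℝ) < ‖w‖ := by rw [norm_pos_iff]; exact hw
  set t : ℝ := (C + ‖y₀‖ + 1) / ‖w‖ with ht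
  have hyC : ‖y₀‖ ≤ C := hC y₀ hy₀
  have hC0 : 0 ≤ C := le_trans (norm_nonneg _) hyC
  have ht0 : 0 ≤ t := by
    apply div_nonneg _ (le_of_lt hwn)
    have := norm_nonneg y₀; linarith
  have hmem : y₀ + t • w ∈ Pz F.U z := by
    intro i
    have h1 := hy₀ i
    have h2 := hcon i
    have heq : ∑ j, F.U i j * (y₀ + t • w) j
        = (∑ j, F.U i j * y₀ j) + t * ∑ j, F.U i j * w j := by
      rw [Finset.mul_sum, ← Finset.sum_add_distrib]
      exact Finset.sum_congr rfl fun j _ => by simp [Pi.add_apply, Pi.smul_apply]; ring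
    rw [heq]; nlinarith
  have hCb := hC _ hmem
  have h2 : ‖t • w‖ ≤ ‖y₀ + t • w‖ + ‖y₀‖ := by
    have hns := norm_sub_le (y₀ + t • w) y₀
    simpa using hns
  have h3 : ‖t • w‖ = C + ‖y₀‖ + 1 := by
    rw [norm_smul, Real.norm_eq_abs, abs_of_nonneg ht0, ht,
      div_mul_cancel₀ _ (ne_of_gt hwn)]
  linarith

lemma step_lemma (hz : IsNormalFanOf F z) (u : κ → ℝ) {σ : Finset ι} (hσ : σ ∈ F.cones)
    (hcard : σ.card = Fintype.card κ) {y : κ → ℝ} (hy : y ∈ Pz F.U z)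
    (hlt : ∑ j, u j * vtx F z σ j < ∑ j, u j * y j) :
    ∃ σ' ∈ F.cones, σ'.card = Fintype.card κ ∧ σ' ≠ σ ∧
      (∃ τ ∈ F.cones, τ.card = Fintype.card κ - 1 ∧ τ ⊆ σ ∧ τ ⊆ σ') ∧
      ∑ j, u j * vtx F z σ j < ∑ j, u j * vtx F z σ' j := by
  classical
  set v := vtx F z σ with hv
  have hvF : v ∈ faceOf F.U z σ := vtx_mem F z hz hσ
  set w : κ → ℝ := fun j => y j - v j with hwdef
  have hc0 : ∀ ρ ∈ σ, 0 ≤ ∑ j, F.U ρ j * w j := by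
    intro ρ hρ
    have h1 := hy ρ
    have h2 := hvF.2 ρ hρ
    have heq : ∑ j, F.U ρ j * w j
        = (∑ j, F.U ρ j * y j) - ∑ j, F.U ρ j * v j := by
      rw [← Finset.sum_sub_distrib]
      exact Finset.sum_congr rfl fun j _ => by simp only [hwdef]; ring
    rw [heq]; linarith
  have hφw : 0 < ∑ j, u j * w j := by
    have heq : ∑ j, u j * w j = (∑ j, u j * y j) - ∑ j, u j * v j := by
      rw [← Finset.sum_sub_distrib]
      exact Finset.sum_congr rfl fun j _ => by simp only [hwdef]; ring
    rw [heq]; linarith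
  -- matrix setup
  have hcards : Fintype.card κ = Fintype.card {x // x ∈ σ} := by
    rw [Fintype.card_coe, hcard]
  set e : κ ≃ {x // x ∈ σ} := Fintype.equivOfCardEq hcards with he
  set A : Matrix κ κ ℝ := Matrix.of (fun k j => F.U (e k).1 j) with hA
  have hAunit : IsUnit A :=
    Matrix.linearIndependent_rows_iff_isUnit.mp ((F.indep σ hσ).comp e e.injective)
  have hdetA : IsUnit A.det := (Matrix.isUnit_iff_isUnit_det A).mp hAunit
  set B := A⁻¹ with hB
  have hAB : A * B = 1 := Matrix.mul_nonsing_inv A hdetA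
  have hBA : B * A = 1 := Matrix.nonsing_inv_mul A hdetA
  set dualv : {x // x ∈ σ} → (κ → ℝ) := fun ρ => fun j => B j (e.symm ρ) with hdualv
  have hdual : ∀ ρ' ρ : {x // x ∈ σ}, (∑ j, F.U ρ'.1 j * dualv ρ j)
      = if ρ' = ρ then 1 else 0 := by
    intro ρ' ρ
    have heq : ∑ j, F.U ρ'.1 j * dualv ρ j = (A * B) (e.symm ρ') (e.symm ρ) := by
      rw [Matrix.mul_apply]
      apply Finset.sum_congr rfl
      intro j _
      simp only [hA, hdualv, Matrix.of_apply, Equiv.apply_symm_apply]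
    rw [heq, hAB, Matrix.one_apply]
    simp only [EmbeddingLike.apply_eq_iff_eq]
  have hexp : ∀ x : κ → ℝ, ∀ j, x j
      = ∑ ρ ∈ σ.attach, (∑ j', F.U ρ.1 j' * x j') * dualv ρ j := by
    intro x j
    have h1 : ∀ ρ : {a // a ∈ σ}, (∑ j', F.U ρ.1 j' * x j') = A.mulVec x (e.symm ρ) := by
      intro ρ
      simp only [Matrix.mulVec, dotProduct, hA, Matrix.of_apply, Equiv.apply_symm_apply]
    calc x j = ((B * A).mulVec x) j := by rw [hBA, Matrix.one_mulVec]
      _ = ∑ k, B j k * A.mulVec x k := by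
          rw [← Matrix.mulVec_mulVec]
          simp [Matrix.mulVec, dotProduct]
      _ = ∑ ρ ∈ σ.attach, B j (e.symm ρ) * A.mulVec x (e.symm ρ) := by
          rw [← Finset.univ_eq_attach]
          exact (Equiv.sum_comp e.symm fun k => B j k * A.mulVec x k).symm
      _ = ∑ ρ ∈ σ.attach, (∑ j', F.U ρ.1 j' * x j') * dualv ρ j := by
          apply Finset.sum_congr rfl
          intro ρ _
          rw [h1]
          simp only [hdualv]
          ring
  have hφsum : ∑ j, u j * w j
      = ∑ ρ ∈ σ.attach, (∑ j', F.U ρ.1 j' * w j') * (∑ j, u j * dualv ρ j) := by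
    calc ∑ j, u j * w j
        = ∑ j, u j * ∑ ρ ∈ σ.attach, (∑ j', F.U ρ.1 j' * w j') * dualv ρ j := by
          exact Finset.sum_congr rfl fun j _ => by rw [← hexp w j]
      _ = ∑ j, ∑ ρ ∈ σ.attach, u j * ((∑ j', F.U ρ.1 j' * w j') * dualv ρ j) := by
          exact Finset.sum_congr rfl fun j _ => Finset.mul_sum _ _ _
      _ = ∑ ρ ∈ σ.attach, ∑ j, u j * ((∑ j', F.U ρ.1 j' * w j') * dualv ρ j) :=
          Finset.sum_comm
      _ = ∑ ρ ∈ σ.attach, (∑ j', F.U ρ.1 j' * w j') * (∑ j, u j * dualv ρ j) := by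
          apply Finset.sum_congr rfl
          intro ρ _
          rw [Finset.mul_sum]
          exact Finset.sum_congr rfl fun j _ => by ring
  have hex : ∃ ρ0 ∈ σ.attach,
      0 < (∑ j', F.U ρ0.1 j' * w j') * (∑ j, u j * dualv ρ0 j) := by
    by_contra hcon
    push_neg at hcon
    have hle := Finset.sum_nonpos hcon
    rw [← hφsum] at hle
    linarith
  obtain ⟨ρ0, _, hρ0⟩ := hex
  have hcρ0 : 0 ≤ ∑ j', F.U ρ0.1 j' * w j' := hc0 ρ0.1 ρ0.2
  have hφd : 0 < ∑ j, u j * dualv ρ0 j := by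
    rcases mul_pos_iff.mp hρ0 with ⟨_, h2⟩ | ⟨h1, _⟩
    · exact h2
    · linarith
  set W := dualv ρ0 with hWdef
  have hW1 : ∑ j, F.U ρ0.1 j * W j = 1 := by
    have := hdual ρ0 ρ0
    rw [if_pos rfl] at this
    exact this
  have hWτ : ∀ ρ' ∈ σ, ρ' ≠ ρ0.1 → ∑ j, F.U ρ' j * W j = 0 := by
    intro ρ' hρ' hne
    have h := hdual ⟨ρ', hρ'⟩ ρ0
    rw [if_neg (fun hc => hne (congrArg Subtype.val hc))] at h
    exact h
  have hWne : W ≠ 0 := by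
    intro h
    rw [h] at hW1
    simp at hW1
  set τ := σ.erase ρ0.1 with hτdef
  have hτ : τ ∈ F.cones := F.downward σ hσ τ (Finset.erase_subset _ _)
  have hτcard : τ.card = Fintype.card κ - 1 := by
    rw [hτdef, Finset.card_erase_of_mem ρ0.2, hcard]
  have htv : tightSet F z v = σ := tightSet_eq F z hz hσ hcard hvF
  have hslack_nonneg : ∀ i, 0 ≤ (∑ j, F.U i j * v j) + z i := hvF.1
  have hslack0 : ∀ i ∈ σ, (∑ j, F.U i j * v j) + z i = 0 := fun i hi => hvF.2 i hi
  have hslackpos : ∀ i, i ∉ σ → 0 < (∑ j, F.U i j * v j) + z i := by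
    intro i hi
    rcases lt_or_eq_of_le (hslack_nonneg i) with h | h
    · exact h
    · exact absurd (htv ▸ (mem_tightSet F z).mpr h.symm) hi
  obtain ⟨i₁, hi₁⟩ := exists_neg_dir F z hz.1 hvF.1 hWne
  set neg := Finset.univ.filter (fun i => ∑ j, F.U i j * W j < 0) with hneg
  have hnegne : neg.Nonempty := ⟨i₁, by rw [hneg, Finset.mem_filter]; exact ⟨Finset.mem_univ _, hi₁⟩⟩
  obtain ⟨i₀, hi₀mem, hi₀min⟩ := neg.exists_min_image
    (fun i => ((∑ j, F.U i j * v j) + z i) / (-(∑ j, F.U i j * W j))) hnegne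
  rw [hneg, Finset.mem_filter] at hi₀mem
  have hai₀ : ∑ j, F.U i₀ j * W j < 0 := hi₀mem.2
  have hi₀σ : i₀ ∉ σ := by
    intro h
    by_cases hh : i₀ = ρ0.1
    · rw [hh, hW1] at hai₀; linarith
    · rw [hWτ i₀ h hh] at hai₀; linarith
  set t := ((∑ j, F.U i₀ j * v j) + z i₀) / (-(∑ j, F.U i₀ j * W j)) with htdef
  have htpos : 0 < t := div_pos (hslackpos i₀ hi₀σ) (by linarith)
  set b : κ → ℝ := fun j => v j + t * W j with hb
  have hslackb : ∀ i, (∑ j, F.U i j * b j) + z i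
      = ((∑ j, F.U i j * v j) + z i) + t * ∑ j, F.U i j * W j := by
    intro i
    have heq : ∑ j, F.U i j * b j
        = (∑ j, F.U i j * v j) + t * ∑ j, F.U i j * W j := by
      rw [Finset.mul_sum, ← Finset.sum_add_distrib]
      exact Finset.sum_congr rfl fun j _ => by simp only [hb]; ring
    rw [heq]; ring
  have hbP : b ∈ Pz F.U z := by
    intro i
    rw [hslackb]
    rcases le_or_gt 0 (∑ j, F.U i j * W j) with h | h
    · have := hslack_nonneg i
      nlinarith
    · have hi : i ∈ neg := by rw [hneg, Finset.mem_filter]; exact ⟨Finset.mem_univ _, h⟩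
      have hmin := hi₀min i hi
      have := (le_div_iff₀ (by linarith : (0:ℝ) < -(∑ j, F.U i j * W j))).mp hmin
      have hnn := hslack_nonneg i
      nlinarith
  have hbτ : ∀ ρ' ∈ τ, (∑ j, F.U ρ' j * b j) + z ρ' = 0 := by
    intro ρ' hρ'
    have h1 : ρ' ∈ σ := (Finset.erase_subset _ _) hρ'
    have h2 : ρ' ≠ ρ0.1 := Finset.ne_of_mem_erase hρ'
    rw [hslackb, hslack0 ρ' h1, hWτ ρ' h1 h2]
    ring
  have hbi₀ : (∑ j, F.U i₀ j * b j) + z i₀ = 0 := by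
    rw [hslackb]
    have hprod : t * (-(∑ j, F.U i₀ j * W j)) = (∑ j, F.U i₀ j * v j) + z i₀ := by
      rw [htdef]
      exact div_mul_cancel₀ _ (by linarith)
    linarith
  set σ' := tightSet F z b with hσ'def
  have hσ'c : σ' ∈ F.cones := tightSet_mem_cones F z hz hbP
  have hτσ' : τ ⊆ σ' := fun ρ' hρ' => (mem_tightSet F z).mpr (hbτ ρ' hρ')
  have hi₀σ' : i₀ ∈ σ' := (mem_tightSet F z).mpr hbi₀
  have hd1 : 1 ≤ Fintype.card κ := by
    have : 0 < σ.card := Finset.card_pos.mpr ⟨ρ0.1, ρ0.2⟩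
    omega
  have hi₀τ : i₀ ∉ τ := fun h => hi₀σ ((Finset.erase_subset _ _) h)
  have hcard' : σ'.card = Fintype.card κ := by
    have h1 : insert i₀ τ ⊆ σ' := Finset.insert_subset hi₀σ' hτσ'
    have h2 : (insert i₀ τ).card = Fintype.card κ := by
      rw [Finset.card_insert_of_notMem hi₀τ, hτcard]; omega
    have h3 := Finset.card_le_card h1
    have h4 := card_cone_le F hσ'c
    omega
  have hbface : b ∈ faceOf F.U z σ' := ⟨hbP, fun i hi => (mem_tightSet F z).mp hi⟩
  have hvtxσ' : vtx F z σ' = b :=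
    faceOf_subsingleton F z hσ'c hcard' (vtx_mem F z hz hσ'c) hbface
  have hσ'ne : σ' ≠ σ := by
    intro h
    have hbv : b = v := faceOf_subsingleton F z hσ hcard (h ▸ hbface) hvF
    apply hWne
    funext j
    have hj := congrFun hbv j
    simp only [hb] at hj
    have ht' : t * W j = 0 := by linarith
    rcases mul_eq_zero.mp ht' with h' | h'
    · exact absurd h' (ne_of_gt htpos)
    · simpa using h'
  refine ⟨σ', hσ'c, hcard', hσ'ne, ⟨τ, hτ, hτcard, Finset.erase_subset _ _, hτσ'⟩, ?_⟩
  rw [hvtxσ']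
  have heq : ∑ j, u j * b j = (∑ j, u j * v j) + t * ∑ j, u j * W j := by
    rw [Finset.mul_sum, ← Finset.sum_add_distrib]
    exact Finset.sum_congr rfl fun j _ => by simp only [hb]; ring
  rw [heq]
  nlinarith

lemma connect (hz : IsNormalFanOf F z) (q : Finset ι → ℂ)
    (hwall : ∀ σ₁ ∈ F.cones, ∀ σ₂ ∈ F.cones, σ₁.card = Fintype.card κ →
      σ₂.card = Fintype.card κ → σ₁ ≠ σ₂ →
      (∃ τ ∈ F.cones, τ.card = Fintype.card κ - 1 ∧ τ ⊆ σ₁ ∧ τ ⊆ σ₂) → q σ₁ = q σ₂) :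
    ∀ σ₁ ∈ F.cones, ∀ σ₂ ∈ F.cones, σ₁.card = Fintype.card κ →
      σ₂.card = Fintype.card κ → q σ₁ = q σ₂ := by
  classical
  intro σa hσa σb hσb hca hcb
  set V := F.cones.filter (fun σ => σ.card = Fintype.card κ) with hV
  have hVa : σa ∈ V := by rw [hV, Finset.mem_filter]; exact ⟨hσa, hca⟩
  have hVb : σb ∈ V := by rw [hV, Finset.mem_filter]; exact ⟨hσb, hcb⟩
  have hvinj : ∀ σ₁ ∈ V, ∀ σ₂ ∈ V, σ₁ ≠ σ₂ → vtx F z σ₁ ≠ vtx F z σ₂ := by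
    intro σ₁ h₁ σ₂ h₂ hne heq
    rw [hV, Finset.mem_filter] at h₁ h₂
    have e₁ : tightSet F z (vtx F z σ₁) = σ₁ :=
      tightSet_eq F z hz h₁.1 h₁.2 (vtx_mem F z hz h₁.1)
    have e₂ : tightSet F z (vtx F z σ₂) = σ₂ :=
      tightSet_eq F z hz h₂.1 h₂.2 (vtx_mem F z hz h₂.1)
    rw [heq, e₂] at e₁
    exact hne e₁.symm
  set s : Finset (κ → ℝ) := ((V ×ˢ V).filter (fun p => p.1 ≠ p.2)).image
      (fun p => fun j => vtx F z p.1 j - vtx F z p.2 j) with hs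
  have hsne : ∀ w ∈ s, w ≠ 0 := by
    intro w hw
    rw [hs, Finset.mem_image] at hw
    obtain ⟨p, hp, rfl⟩ := hw
    rw [Finset.mem_filter, Finset.mem_product] at hp
    intro h0
    apply hvinj p.1 hp.1.1 p.2 hp.1.2 hp.2
    funext j
    have := congrFun h0 j
    simp only [Pi.zero_apply] at this
    linarith
  obtain ⟨u, hu⟩ := exists_generic s hsne
  have hugen : ∀ σ₁ ∈ V, ∀ σ₂ ∈ V, σ₁ ≠ σ₂ →
      (∑ j, u j * vtx F z σ₁ j) ≠ ∑ j, u j * vtx F z σ₂ j := by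
    intro σ₁ h₁ σ₂ h₂ hne heq
    have hmem : (fun j => vtx F z σ₁ j - vtx F z σ₂ j) ∈ s := by
      rw [hs, Finset.mem_image]
      exact ⟨(σ₁, σ₂), by rw [Finset.mem_filter, Finset.mem_product]; exact ⟨⟨h₁, h₂⟩, hne⟩, rfl⟩
    apply hu _ hmem
    have heq2 : ∑ j, (vtx F z σ₁ j - vtx F z σ₂ j) * u j
        = (∑ j, u j * vtx F z σ₁ j) - ∑ j, u j * vtx F z σ₂ j := by
      rw [← Finset.sum_sub_distrib]
      exact Finset.sum_congr rfl fun j _ => by ring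
    rw [heq2, heq, sub_self]
  have hVne : V.Nonempty := ⟨σa, hVa⟩
  obtain ⟨σm, hσm, hmax⟩ := V.exists_max_image (fun σ => ∑ j, u j * vtx F z σ j) hVne
  have main : ∀ k : ℕ, ∀ σ ∈ V,
      (V.filter (fun σ'' => ∑ j, u j * vtx F z σ j < ∑ j, u j * vtx F z σ'' j)).card = k →
      q σ = q σm := by
    intro k
    induction k using Nat.strong_induction_on with
    | _ k ih =>
      intro σ hσV hk
      by_cases hEq : σ = σm
      · rw [hEq]
      · have hVσ := Finset.mem_filter.mp hσV
        have hVσm := Finset.mem_filter.mp hσm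
        have hlt : ∑ j, u j * vtx F z σ j < ∑ j, u j * vtx F z σm j := by
          rcases lt_or_eq_of_le (hmax σ hσV) with h | h
          · exact h
          · exact absurd h (hugen σ hσV σm hσm hEq)
        obtain ⟨σ₂, hσ₂c, hσ₂card, hσ₂ne, hwallex, hφ₂⟩ :=
          step_lemma F z hz u hVσ.1 hVσ.2 (vtx_mem F z hz hVσm.1).1 hlt
        have hσ₂V : σ₂ ∈ V := Finset.mem_filter.mpr ⟨hσ₂c, hσ₂card⟩
        have hq2 : q σ = q σ₂ :=
          hwall σ hVσ.1 σ₂ hσ₂c hVσ.2 hσ₂card (fun h => hσ₂ne h.symm) hwallex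
        have hmeas :
            (V.filter (fun σ'' => ∑ j, u j * vtx F z σ₂ j < ∑ j, u j * vtx F z σ'' j)).card
              < k := by
          rw [← hk]
          apply Finset.card_lt_card
          rw [Finset.ssubset_def]
          constructor
          · intro σ'' h
            rw [Finset.mem_filter] at h ⊢
            exact ⟨h.1, lt_trans hφ₂ h.2⟩
          · intro hsub
            have hmem2 : σ₂ ∈ V.filter
                (fun σ'' => ∑ j, u j * vtx F z σ j < ∑ j, u j * vtx F z σ'' j) :=
              Finset.mem_filter.mpr ⟨hσ₂V, hφ₂⟩
            have := hsub hmem2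
            rw [Finset.mem_filter] at this
            exact lt_irrefl _ this.2
        rw [hq2]
        exact ih _ hmeas σ₂ hσ₂V rfl
  rw [main _ σa hVa rfl, main _ σb hVb rfl]

end Geometry

end St9

/-- (Interpolation.) Let `P` be a full-dimensional simple polytope
with `n` facets, normal fan `Σ` and ray matrix `U`. Any homogeneous polynomial `f` of
degree `n - d` that vanishes on the coordinate subspace `Λ_J` for every primitive
collection `J`, and on the `(n-d-1)`-plane `Λ_e ∩ H_e` for every edge `e` of `P`
(encoded by its normal cone `τ ∈ Σ(d-1)`, the two maximal cones `σ₁, σ₂ ⊇ τ`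
corresponding to the vertices of `e`, and the rays `ρ₁ ∈ σ₁ ∖ τ`, `ρ₂ ∈ σ₂ ∖ τ`
of the facets `Q_e¹, Q_e²`), is a scalar multiple of the universal adjoint `Adj_P`.
Hence `A_P` is the unique such hypersurface of degree `n - d`. -/
theorem statement9 {ι κ : Type*} [Fintype ι] [DecidableEq ι] [Fintype κ] [DecidableEq κ]
    (F : SimplicialFan ι κ) (hrank : F.U.rank = Fintype.card κ)
    (z : ι → ℝ) (hz : IsNormalFanOf F z)
    (f : MvPolynomial ι ℂ)
    (hdeg : f.IsHomogeneous (Fintype.card ι - Fintype.card κ))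
    (h1 : ∀ J : Finset ι, (∀ σ ∈ F.cones, ¬ J ⊆ σ) →
      (∀ ρ ∈ J, ∃ σ ∈ F.cones, J.erase ρ ⊆ σ) →
      ∀ x : ι → ℂ, (∀ ρ ∈ J, x ρ = 0) → MvPolynomial.eval x f = 0)
    (h2 : ∀ τ ∈ F.cones, τ.card = Fintype.card κ - 1 →
      ∀ σ₁ ∈ F.cones, ∀ σ₂ ∈ F.cones,
        σ₁.card = Fintype.card κ → σ₂.card = Fintype.card κ →
        τ ⊆ σ₁ → τ ⊆ σ₂ → σ₁ ≠ σ₂ →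
        ∀ ρ₁ ∈ σ₁ \ τ, ∀ ρ₂ ∈ σ₂ \ τ,
        ∀ x : ι → ℂ, (∀ ρ ∈ τ, x ρ = 0) →
          (absDetRows F.U σ₁ : ℂ) * x ρ₂ + (absDetRows F.U σ₂ : ℂ) * x ρ₁ = 0 →
          MvPolynomial.eval x f = 0) :
    ∃ c : ℂ, f = c • MvPolynomial.map (algebraMap ℝ ℂ) (Adj F.U F.cones) := by
  classical
  have hdn : Fintype.card κ ≤ Fintype.card ι := by
    have h := F.U.rank_le_card_height
    rw [hrank] at h
    exact h
  set V := F.cones.filter (fun σ => σ.card = Fintype.card κ) with hV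
  set c : Finset ι → ℂ := fun σ => MvPolynomial.coeff (St9.monExp σᶜ) f with hc
  -- Step 1: support characterization
  have hsupp : ∀ m ∈ f.support, ∃ σ ∈ V, m = St9.monExp σᶜ := by
    intro m hm
    have hface : ∃ σ0 ∈ F.cones, m.supportᶜ ⊆ σ0 := by
      by_contra hcon
      push_neg at hcon
      obtain ⟨J, hJsub, hJ1, hJ2⟩ := St9.exists_minimal_nonface F.cones m.supportᶜ hcon
      have hvan := h1 J hJ1 hJ2
      have hcoeff := St9.coeff_eq_zero_of_vanish hvan
        (m := m) (fun ρ hρ => by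
          have hns : ρ ∉ m.support := Finset.mem_compl.mp (hJsub hρ)
          exact Finsupp.notMem_support_iff.mp hns)
      exact (MvPolynomial.mem_support_iff.mp hm) hcoeff
    obtain ⟨σ0, hσ0, hsub⟩ := hface
    have hw := hdeg (MvPolynomial.mem_support_iff.mp hm)
    have hdegm : ∑ ρ ∈ m.support, m ρ = Fintype.card ι - Fintype.card κ := by
      have hd1 : m.degree = Finsupp.weight 1 m := by rw [Finsupp.degree_eq_weight_one]; rfl
      have : m.degree = Fintype.card ι - Fintype.card κ := by rw [hd1]; exact hw
      rwa [show m.degree = ∑ ρ ∈ m.support, m ρ from rfl] at this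
    have hcardS : m.support.card ≤ Fintype.card ι - Fintype.card κ := by
      calc m.support.card = ∑ _ρ ∈ m.support, 1 := by simp
        _ ≤ ∑ ρ ∈ m.support, m ρ := Finset.sum_le_sum (fun ρ hρ => by
            have := Finsupp.mem_support_iff.mp hρ; omega)
        _ = _ := hdegm
    have hcardSc : m.supportᶜ.card = Fintype.card ι - m.support.card :=
      Finset.card_compl _
    have hσ0le := St9.card_cone_le F hσ0
    have hcc : m.supportᶜ.card ≤ σ0.card := Finset.card_le_card hsub
    have hceq : m.supportᶜ = σ0 := Finset.eq_of_subset_of_card_le hsub (by omega)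
    have hcards : m.supportᶜ.card = Fintype.card κ := by omega
    have hScard : m.support.card = Fintype.card ι - Fintype.card κ := by omega
    have hone : ∀ ρ ∈ m.support, m ρ = 1 := by
      by_contra hcon
      push_neg at hcon
      obtain ⟨ρ1, hρ1S, hρ1⟩ := hcon
      have h2 : ∑ _ρ ∈ m.support, 1 < ∑ ρ ∈ m.support, m ρ := by
        apply Finset.sum_lt_sum
        · intro ρ hρ; have := Finsupp.mem_support_iff.mp hρ; omega
        · exact ⟨ρ1, hρ1S, by have := Finsupp.mem_support_iff.mp hρ1S; omega⟩
      rw [Finset.sum_const, smul_eq_mul, mul_one] at h2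
      omega
    refine ⟨m.supportᶜ, ?_, ?_⟩
    · rw [hV, Finset.mem_filter]
      exact ⟨hceq ▸ hσ0, hcards⟩
    · rw [compl_compl]
      ext j
      rw [St9.monExp_apply]
      by_cases hj : j ∈ m.support
      · rw [if_pos hj]; exact hone j hj
      · rw [if_neg hj]; exact Finsupp.notMem_support_iff.mp hj
  -- Step 2: f as a combination of squarefree monomials
  have hf : f = ∑ σ ∈ V, MvPolynomial.monomial (St9.monExp σᶜ) (c σ) := by
    apply MvPolynomial.ext
    intro m
    rw [MvPolynomial.coeff_sum]
    by_cases hmem : ∃ σ1 ∈ V, m = St9.monExp σ1ᶜ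
    · obtain ⟨σ1, hσ1, rfl⟩ := hmem
      rw [Finset.sum_eq_single_of_mem σ1 hσ1]
      · rw [MvPolynomial.coeff_monomial, if_pos rfl]
      · intro σ2 hσ2 hne2
        rw [MvPolynomial.coeff_monomial, if_neg]
        intro hcon
        apply hne2
        have h2 := St9.monExp_injective hcon
        have := congrArg (fun (u : Finset ι) => uᶜ) h2
        simpa [compl_compl] using this
    · push_neg at hmem
      have h0 : MvPolynomial.coeff m f = 0 := by
        by_contra hc0
        obtain ⟨σ, hσ, hmeq⟩ := hsupp m (MvPolynomial.mem_support_iff.mpr hc0)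
        exact hmem σ hσ hmeq
      rw [h0]
      symm
      apply Finset.sum_eq_zero
      intro σ hσ
      rw [MvPolynomial.coeff_monomial, if_neg (fun hcon => hmem σ hσ hcon.symm)]
  -- nonvanishing determinants
  have hdet : ∀ σ ∈ V, absDetRows F.U σ ≠ 0 := by
    intro σ hσ
    rw [hV, Finset.mem_filter] at hσ
    exact St9.absDetRows_ne_zero F.U σ hσ.2 (F.indep σ hσ.1)
  -- Step 3: wall relation
  have hwall : ∀ σ₁ ∈ V, ∀ σ₂ ∈ V, σ₁ ≠ σ₂ →
      (∃ τ ∈ F.cones, τ.card = Fintype.card κ - 1 ∧ τ ⊆ σ₁ ∧ τ ⊆ σ₂) →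
      (absDetRows F.U σ₂ : ℂ) * c σ₁ = (absDetRows F.U σ₁ : ℂ) * c σ₂ := by
    intro σ₁ hσ₁V σ₂ hσ₂V hne hex
    obtain ⟨τ, hτc, hτcard, hts₁, hts₂⟩ := hex
    obtain ⟨hσ₁c, hσ₁card⟩ := Finset.mem_filter.mp hσ₁V
    obtain ⟨hσ₂c, hσ₂card⟩ := Finset.mem_filter.mp hσ₂V
    have hd1 : 1 ≤ Fintype.card κ := by
      rcases Nat.eq_zero_or_pos (Fintype.card κ) with h | h
      · exfalso
        apply hne
        have e1 : σ₁ = ∅ := Finset.card_eq_zero.mp (by omega)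
        have e2 : σ₂ = ∅ := Finset.card_eq_zero.mp (by omega)
        rw [e1, e2]
      · exact h
    have hinsert : ∀ ρ, ρ ∉ τ → ∀ σ ∈ V, τ ⊆ σ → ρ ∈ σ → σ = insert ρ τ := by
      intro ρ hρτ σ hσV hts hρσ
      obtain ⟨_, hσcard⟩ := Finset.mem_filter.mp hσV
      refine (Finset.eq_of_subset_of_card_le (Finset.insert_subset hρσ hts) ?_).symm
      rw [Finset.card_insert_of_notMem hρτ, hσcard, hτcard]
      omega
    have h1card : (σ₁ \ τ).card = 1 := by
      rw [Finset.card_sdiff_of_subset hts₁]; omega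
    have h2card : (σ₂ \ τ).card = 1 := by
      rw [Finset.card_sdiff_of_subset hts₂]; omega
    obtain ⟨ρ₁, hρ₁⟩ := Finset.card_eq_one.mp h1card
    obtain ⟨ρ₂, hρ₂⟩ := Finset.card_eq_one.mp h2card
    have hρ₁m : ρ₁ ∈ σ₁ \ τ := by rw [hρ₁]; exact Finset.mem_singleton_self _
    have hρ₂m : ρ₂ ∈ σ₂ \ τ := by rw [hρ₂]; exact Finset.mem_singleton_self _
    have hρ₁σ : ρ₁ ∈ σ₁ := (Finset.mem_sdiff.mp hρ₁m).1
    have hρ₁τ : ρ₁ ∉ τ := (Finset.mem_sdiff.mp hρ₁m).2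
    have hρ₂σ : ρ₂ ∈ σ₂ := (Finset.mem_sdiff.mp hρ₂m).1
    have hρ₂τ : ρ₂ ∉ τ := (Finset.mem_sdiff.mp hρ₂m).2
    have hσ₁eq : σ₁ = insert ρ₁ τ := hinsert ρ₁ hρ₁τ σ₁ hσ₁V hts₁ hρ₁σ
    have hσ₂eq : σ₂ = insert ρ₂ τ := hinsert ρ₂ hρ₂τ σ₂ hσ₂V hts₂ hρ₂σ
    have hρ₁notσ₂ : ρ₁ ∉ σ₂ := by
      intro h
      exact hne (hσ₁eq.trans (hinsert ρ₁ hρ₁τ σ₂ hσ₂V hts₂ h).symm)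
    have hρ₂notσ₁ : ρ₂ ∉ σ₁ := by
      intro h
      exact hne ((hinsert ρ₂ hρ₂τ σ₁ hσ₁V hts₁ h).trans hσ₂eq.symm)
    have hρne : ρ₁ ≠ ρ₂ := fun h => hρ₁notσ₂ (h ▸ hρ₂σ)
    set D₁ := ((absDetRows F.U σ₁ : ℝ) : ℂ) with hD₁
    set D₂ := ((absDetRows F.U σ₂ : ℝ) : ℂ) with hD₂
    set x : ℂ → ι → ℂ := fun t ρ =>
      if ρ ∈ τ then 0 else if ρ = ρ₁ then D₁ * t else if ρ = ρ₂ then -D₂ * t else 1 with hx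
    have hxρ₁ : ∀ t : ℂ, x t ρ₁ = D₁ * t := by
      intro t; simp only [hx]; simp [hρ₁τ]
    have hxρ₂ : ∀ t : ℂ, x t ρ₂ = -D₂ * t := by
      intro t; simp only [hx]; simp [hρ₂τ, hρne.symm]
    have heval : ∀ t : ℂ, MvPolynomial.eval (x t) f = 0 := by
      intro t
      apply h2 τ hτc hτcard σ₁ hσ₁c σ₂ hσ₂c hσ₁card hσ₂card hts₁ hts₂ hne
        ρ₁ hρ₁m ρ₂ hρ₂m (x t)
      · intro ρ hρ; simp only [hx]; rw [if_pos hρ]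
      · rw [hxρ₁, hxρ₂]; ring
    have hform : ∀ t : ℂ, MvPolynomial.eval (x t) f
        = ∑ σ ∈ V, c σ * ∏ ρ ∈ σᶜ, x t ρ := by
      intro t
      conv_lhs => rw [hf]
      rw [map_sum]
      exact Finset.sum_congr rfl fun σ _ => St9.eval_monExp _ _ _
    set V' := V.filter (fun σ => τ ⊆ σ) with hV'
    have hsplit : ∀ t : ℂ, MvPolynomial.eval (x t) f
        = ∑ σ ∈ V', c σ * ∏ ρ ∈ σᶜ, x t ρ := by
      intro t
      rw [hform t, ← Finset.sum_filter_add_sum_filter_not V (fun σ => τ ⊆ σ)]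
      have hz2 : ∑ σ ∈ V.filter (fun σ => ¬ τ ⊆ σ), c σ * ∏ ρ ∈ σᶜ, x t ρ = 0 := by
        apply Finset.sum_eq_zero
        intro σ hσ
        obtain ⟨hσV, hnsub⟩ := Finset.mem_filter.mp hσ
        obtain ⟨ρτ, hρττ, hρτσ⟩ := Finset.not_subset.mp hnsub
        have hzf : x t ρτ = 0 := by simp only [hx]; rw [if_pos hρττ]
        rw [Finset.prod_eq_zero (Finset.mem_compl.mpr hρτσ) hzf, mul_zero]
      rw [hz2, add_zero]
    have hσ₁V' : σ₁ ∈ V' := Finset.mem_filter.mpr ⟨hσ₁V, hts₁⟩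
    have hσ₂V' : σ₂ ∈ V'.erase σ₁ :=
      Finset.mem_erase.mpr ⟨hne.symm, Finset.mem_filter.mpr ⟨hσ₂V, hts₂⟩⟩
    have hterm : ∀ t : ℂ, ∀ σ ∈ V', ∏ ρ ∈ σᶜ, x t ρ
        = (if ρ₁ ∈ σᶜ then D₁ * t else 1) * (if ρ₂ ∈ σᶜ then -D₂ * t else 1) := by
      intro t σ hσ
      obtain ⟨hσV, hts⟩ := Finset.mem_filter.mp hσ
      rw [St9.prod_almost_one σᶜ (x t) ρ₁ ρ₂ hρne (fun ρ hρ hr1 hr2 => by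
        have hρτ2 : ρ ∉ τ := fun hcon => (Finset.mem_compl.mp hρ) (hts hcon)
        simp only [hx]; rw [if_neg hρτ2, if_neg hr1, if_neg hr2]), hxρ₁, hxρ₂]
    have hmain : ∀ t : ℂ,
        c σ₁ * (-D₂ * t) + (c σ₂ * (D₁ * t)
          + (∑ σ ∈ (V'.erase σ₁).erase σ₂, c σ) * ((D₁ * t) * (-D₂ * t))) = 0 := by
      intro t
      have h0 := heval t
      rw [hsplit t, ← Finset.add_sum_erase _ _ hσ₁V',
        ← Finset.add_sum_erase _ _ hσ₂V'] at h0
      have e₁ : c σ₁ * ∏ ρ ∈ σ₁ᶜ, x t ρ = c σ₁ * (-D₂ * t) := by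
        rw [hterm t σ₁ hσ₁V', if_neg (fun h => (Finset.mem_compl.mp h) hρ₁σ),
          if_pos (Finset.mem_compl.mpr hρ₂notσ₁)]
        ring
      have e₂ : c σ₂ * ∏ ρ ∈ σ₂ᶜ, x t ρ = c σ₂ * (D₁ * t) := by
        rw [hterm t σ₂ (Finset.mem_of_mem_erase hσ₂V'),
          if_pos (Finset.mem_compl.mpr hρ₁notσ₂),
          if_neg (fun h => (Finset.mem_compl.mp h) hρ₂σ)]
        ring
      have e₃ : ∑ σ ∈ (V'.erase σ₁).erase σ₂, c σ * ∏ ρ ∈ σᶜ, x t ρ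
          = (∑ σ ∈ (V'.erase σ₁).erase σ₂, c σ) * ((D₁ * t) * (-D₂ * t)) := by
        rw [Finset.sum_mul]
        apply Finset.sum_congr rfl
        intro σ hσ
        have hσV'2 : σ ∈ V' := Finset.mem_of_mem_erase (Finset.mem_of_mem_erase hσ)
        have hneσ₁ : σ ≠ σ₁ := Finset.ne_of_mem_erase (Finset.mem_of_mem_erase hσ)
        have hneσ₂ : σ ≠ σ₂ := Finset.ne_of_mem_erase hσ
        obtain ⟨hσV2, hts2⟩ := Finset.mem_filter.mp hσV'2
        have hρ₁no : ρ₁ ∉ σ := fun h =>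
          hneσ₁ ((hinsert ρ₁ hρ₁τ σ hσV2 hts2 h).trans hσ₁eq.symm)
        have hρ₂no : ρ₂ ∉ σ := fun h =>
          hneσ₂ ((hinsert ρ₂ hρ₂τ σ hσV2 hts2 h).trans hσ₂eq.symm)
        rw [hterm t σ hσV'2, if_pos (Finset.mem_compl.mpr hρ₁no),
          if_pos (Finset.mem_compl.mpr hρ₂no)]
      rw [e₁, e₂, e₃] at h0
      exact h0
    have hA := hmain 1
    have hB := hmain (-1)
    rw [hD₁, hD₂] at hA hB ⊢
    linear_combination (hB - hA) / 2
  -- Step 4: conclusion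
  rcases Finset.eq_empty_or_nonempty V with hVempty | hVne
  · refine ⟨0, ?_⟩
    rw [hf, hVempty, Finset.sum_empty, zero_smul]
  · obtain ⟨σ₀, hσ₀⟩ := hVne
    set q : Finset ι → ℂ := fun σ => c σ / ((absDetRows F.U σ : ℝ) : ℂ) with hq
    have hqwall : ∀ σ₁ ∈ F.cones, ∀ σ₂ ∈ F.cones, σ₁.card = Fintype.card κ →
        σ₂.card = Fintype.card κ → σ₁ ≠ σ₂ →
        (∃ τ ∈ F.cones, τ.card = Fintype.card κ - 1 ∧ τ ⊆ σ₁ ∧ τ ⊆ σ₂) →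
        q σ₁ = q σ₂ := by
      intro σ₁ h₁ σ₂ h₂ hc₁ hc₂ hne hex
      have hV₁ : σ₁ ∈ V := Finset.mem_filter.mpr ⟨h₁, hc₁⟩
      have hV₂ : σ₂ ∈ V := Finset.mem_filter.mpr ⟨h₂, hc₂⟩
      have hrel := hwall σ₁ hV₁ σ₂ hV₂ hne hex
      have hD₁ : ((absDetRows F.U σ₁ : ℝ) : ℂ) ≠ 0 :=
        Complex.ofReal_ne_zero.mpr (hdet σ₁ hV₁)
      have hD₂ : ((absDetRows F.U σ₂ : ℝ) : ℂ) ≠ 0 :=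
        Complex.ofReal_ne_zero.mpr (hdet σ₂ hV₂)
      rw [hq]
      rw [div_eq_div_iff hD₁ hD₂]
      linear_combination hrel
    have hconn := St9.connect F z hz q hqwall
    refine ⟨q σ₀, ?_⟩
    have hAdj : MvPolynomial.map (algebraMap ℝ ℂ) (Adj F.U F.cones)
        = ∑ σ ∈ V, MvPolynomial.monomial (St9.monExp σᶜ) ((absDetRows F.U σ : ℝ) : ℂ) := by
      rw [Adj, map_sum, ← hV]
      apply Finset.sum_congr rfl
      intro σ _
      rw [St9.prodX_eq, MvPolynomial.C_mul_monomial, mul_one, MvPolynomial.map_monomial]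
      rfl
    rw [hf, hAdj, Finset.smul_sum]
    apply Finset.sum_congr rfl
    intro σ hσ
    rw [MvPolynomial.smul_monomial]
    congr 1
    obtain ⟨hσc, hσcard⟩ := Finset.mem_filter.mp hσ
    obtain ⟨hσ₀c, hσ₀card⟩ := Finset.mem_filter.mp hσ₀
    have hqσ : q σ = q σ₀ := hconn σ hσc σ₀ hσ₀c hσcard hσ₀card
    have hDσ : ((absDetRows F.U σ : ℝ) : ℂ) ≠ 0 :=
      Complex.ofReal_ne_zero.mpr (hdet σ hσ)
    rw [← hqσ, hq, smul_eq_mul]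
    exact (div_mul_cancel₀ _ hDσ).symm
end
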